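/- arXiv:1804.01510 — 4 statements merged into one kernel-verified Lean document; each statement's English description precedes it below -/
import Mathlib

section
/- Let q be a prime power and let b, c, d be natural numbers. The number of pairs of matrices (A, B) with A an b×c matrix over F_q and B a c×d matrix over F_q such that AB = 0 equals the sum over r from 0 to min(b,c) of (Q_r(b) · Q_r(c) / Q_r(r)) · q^(d(c-r)), where Q_i(j) = ∏_{k=0}^{i-1} (q^j - q^k). -/
open LinearMap Module Submodule

section Aux

theorem nat_card_sigma' {ι : Type*} [Fintype ι] (f : ι → Type*) [∀ i, Finite (f i)] :
    Nat.card ((i : ι) × f i) = ∑ i, Nat.card (f i) := by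
  have := fun i => Fintype.ofFinite (f i)
  simp only [Nat.card_eq_fintype_card, Fintype.card_sigma]

theorem lemA (b c d : ℕ) (F : Type) [Field F] [Fintype F]
    (A : Matrix (Fin b) (Fin c) F) :
    Nat.card {B : Matrix (Fin c) (Fin d) F // A * B = 0} =
      Fintype.card F ^ (d * (c - A.rank)) := by
  classical
  have key : ∀ B : Matrix (Fin c) (Fin d) F,
      A * B = 0 ↔ ∀ j, A.mulVecLin (fun i => B i j) = 0 := by
    intro B
    constructor
    · intro h j
      ext i
      have := congrFun (congrFun h i) j
      simpa [Matrix.mulVecLin_apply, Matrix.mulVec, dotProduct,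
        Matrix.mul_apply] using this
    · intro h
      ext i j
      have := congrFun (h j) i
      simpa [Matrix.mulVecLin_apply, Matrix.mulVec, dotProduct,
        Matrix.mul_apply] using this
  have e : {B : Matrix (Fin c) (Fin d) F // A * B = 0} ≃
      (Fin d → LinearMap.ker A.mulVecLin) := {
    toFun := fun B j => ⟨fun i => B.1 i j, by
      rw [LinearMap.mem_ker]; exact (key B.1).1 B.2 j⟩
    invFun := fun f => ⟨fun i j => (f j).1 i, (key _).2 fun j => (f j).2⟩
    left_inv := fun B => rfl
    right_inv := fun f => rfl }
  rw [Nat.card_congr e, Nat.card_eq_fintype_card, Fintype.card_fun]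
  have hker : Module.finrank F (LinearMap.ker A.mulVecLin) = c - A.rank := by
    have h := LinearMap.finrank_range_add_finrank_ker A.mulVecLin
    rw [Module.finrank_fintype_fun_eq_card, Fintype.card_fin] at h
    have : A.rank = Module.finrank F (LinearMap.range A.mulVecLin) := rfl
    omega
  rw [Fintype.card_fin, card_eq_pow_finrank (K := F), hker, ← pow_mul, mul_comm (c - A.rank) d]

theorem hmv' {c r : ℕ} {F : Type} [Field F] [Fintype F] (g : (Fin c → F) →ₗ[F] (Fin r → F)) :
    (LinearMap.toMatrix' g).mulVecLin = g := by
  rw [← Matrix.toLin'_apply', Matrix.toLin'_toMatrix']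

theorem surjCount (c r : ℕ) (hrc : r ≤ c) (F : Type) [Field F] [Fintype F] :
    Nat.card {g : (Fin c → F) →ₗ[F] (Fin r → F) // Function.Surjective g} =
      ∏ k ∈ Finset.range r, (Fintype.card F ^ c - Fintype.card F ^ k) := by
  classical
  have e1 : {g : (Fin c → F) →ₗ[F] (Fin r → F) // Function.Surjective g} ≃
      {M : Matrix (Fin r) (Fin c) F // Function.Surjective M.mulVecLin} :=
    Equiv.subtypeEquiv (LinearMap.toMatrix' (R := F)).toEquiv (by
      intro g
      simp only [LinearEquiv.coe_toEquiv]
      rw [hmv' g])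
  have key : ∀ M : Matrix (Fin r) (Fin c) F,
      Function.Surjective M.mulVecLin ↔ LinearIndependent F (fun i : Fin r => M i) := by
    intro M
    rw [← LinearMap.range_eq_top]
    constructor
    · intro h
      apply linearIndependent_iff_card_eq_finrank_span.2
      have hr : M.rank = r := by
        rw [Matrix.rank, h, finrank_top, Module.finrank_fintype_fun_eq_card, Fintype.card_fin]
      rw [Fintype.card_fin, Set.finrank]
      change r = finrank F (span F (Set.range M.row))
      rw [← Matrix.rank_eq_finrank_span_row, hr]
    · intro h
      apply Submodule.eq_top_of_finrank_eq
      rw [Module.finrank_fintype_fun_eq_card, Fintype.card_fin, ← Matrix.rank]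
      simpa using h.rank_matrix
  have e2 : {M : Matrix (Fin r) (Fin c) F // Function.Surjective M.mulVecLin} ≃
      {s : Fin r → (Fin c → F) // LinearIndependent F s} :=
    Equiv.subtypeEquiv (Equiv.refl _) (by intro M; exact key M)
  rw [Nat.card_congr (e1.trans e2), card_linearIndependent
    (by rwa [Module.finrank_fintype_fun_eq_card, Fintype.card_fin]),
    Module.finrank_fintype_fun_eq_card, Fintype.card_fin, Finset.prod_range]

def spanFiber (b r : ℕ) (F : Type) [Field F] [Fintype F]
    (W : {W : Submodule F (Fin b → F) // finrank F W = r}) :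
    {s : {s : Fin r → (Fin b → F) // LinearIndependent F s} //
        (⟨span F (Set.range s.1), by rw [finrank_span_eq_card s.2, Fintype.card_fin]⟩ :
          {W : Submodule F (Fin b → F) // finrank F W = r}) = W} ≃
      {t : Fin r → W.1 // LinearIndependent F t} where
  toFun s := ⟨fun i => ⟨s.1.1 i, by
      have h : span F (Set.range s.1.1) = W.1 := congrArg Subtype.val s.2
      exact h ▸ subset_span (Set.mem_range_self i)⟩,
    by
      apply LinearIndependent.of_comp W.1.subtype
      exact s.1.2⟩
  invFun t := ⟨⟨fun i => (t.1 i).1, t.2.map' W.1.subtype (ker_subtype W.1)⟩, by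
    apply Subtype.ext
    show span F (Set.range fun i => ((t.1 i : W.1) : Fin b → F)) = W.1
    have : (Set.range fun i => ((t.1 i : W.1) : Fin b → F)) = W.1.subtype '' Set.range t.1 := by
      rw [← Set.range_comp]; rfl
    rw [this, ← Submodule.map_span, t.2.span_eq_top_of_card_eq_finrank'
      (by rw [Fintype.card_fin, W.2]), Submodule.map_top, range_subtype]⟩
  left_inv s := by apply Subtype.ext; apply Subtype.ext; rfl
  right_inv t := by apply Subtype.ext; funext i; apply Subtype.ext; rfl

theorem subCount (b r : ℕ) (hrb : r ≤ b) (F : Type) [Field F] [Fintype F] :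
    Nat.card {W : Submodule F (Fin b → F) // finrank F W = r} *
      ∏ k ∈ Finset.range r, (Fintype.card F ^ r - Fintype.card F ^ k) =
      ∏ k ∈ Finset.range r, (Fintype.card F ^ b - Fintype.card F ^ k) := by
  classical
  have h1 : Nat.card {s : Fin r → (Fin b → F) // LinearIndependent F s} =
      ∏ k ∈ Finset.range r, (Fintype.card F ^ b - Fintype.card F ^ k) := by
    rw [card_linearIndependent (by rwa [Module.finrank_fintype_fun_eq_card, Fintype.card_fin]),
      Module.finrank_fintype_fun_eq_card, Fintype.card_fin, Finset.prod_range]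
  rw [← h1]
  have e := (Equiv.sigmaFiberEquiv
    (fun s : {s : Fin r → (Fin b → F) // LinearIndependent F s} =>
      (⟨span F (Set.range s.1), by rw [finrank_span_eq_card s.2, Fintype.card_fin]⟩ :
        {W : Submodule F (Fin b → F) // finrank F W = r}))).symm
  rw [Nat.card_congr e]
  have fib : ∀ W : {W : Submodule F (Fin b → F) // finrank F W = r},
      Nat.card {s : {s : Fin r → (Fin b → F) // LinearIndependent F s} //
        (⟨span F (Set.range s.1), by rw [finrank_span_eq_card s.2, Fintype.card_fin]⟩ :
          {W : Submodule F (Fin b → F) // finrank F W = r}) = W} =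
      ∏ k ∈ Finset.range r, (Fintype.card F ^ r - Fintype.card F ^ k) := by
    intro W
    rw [Nat.card_congr (spanFiber b r F W),
      card_linearIndependent (by rw [W.2]), W.2, Finset.prod_range]
  have := Fintype.ofFinite {W : Submodule F (Fin b → F) // finrank F W = r}
  rw [nat_card_sigma', Finset.sum_congr rfl (fun W _ => fib W), Finset.sum_const,
    Finset.card_univ, Nat.card_eq_fintype_card, smul_eq_mul]

def rankFiber (b c r : ℕ) (F : Type) [Field F] [Fintype F]
    (W : {W : Submodule F (Fin b → F) // finrank F W = r}) :
    {A : {A : Matrix (Fin b) (Fin c) F // A.rank = r} //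
        (⟨LinearMap.range A.1.mulVecLin, A.2⟩ :
          {W : Submodule F (Fin b → F) // finrank F W = r}) = W} ≃
      {g : (Fin c → F) →ₗ[F] W.1 // Function.Surjective g} where
  toFun A := by
    refine ⟨codRestrict W.1 A.1.1.mulVecLin (fun v => ?_), ?_⟩
    · have hW : LinearMap.range A.1.1.mulVecLin = W.1 := congrArg Subtype.val A.2
      exact hW ▸ LinearMap.mem_range_self _ v
    · intro w
      have hW : LinearMap.range A.1.1.mulVecLin = W.1 := congrArg Subtype.val A.2
      have : (w : Fin b → F) ∈ LinearMap.range A.1.1.mulVecLin := by rw [hW]; exact w.2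
      obtain ⟨v, hv⟩ := this
      exact ⟨v, Subtype.ext hv⟩
  invFun g := by
    refine ⟨⟨LinearMap.toMatrix' (W.1.subtype ∘ₗ g.1), ?_⟩, ?_⟩
    · have : LinearMap.range (LinearMap.toMatrix' (W.1.subtype ∘ₗ g.1)).mulVecLin = W.1 := by
        rw [hmv' (W.1.subtype ∘ₗ g.1), LinearMap.range_comp, LinearMap.range_eq_top.2 g.2,
          Submodule.map_top, range_subtype]
      rw [Matrix.rank, this, W.2]
    · apply Subtype.ext
      show LinearMap.range (LinearMap.toMatrix' (W.1.subtype ∘ₗ g.1)).mulVecLin = W.1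
      rw [hmv' (W.1.subtype ∘ₗ g.1), LinearMap.range_comp, LinearMap.range_eq_top.2 g.2,
        Submodule.map_top, range_subtype]
  left_inv A := by
    apply Subtype.ext; apply Subtype.ext
    show LinearMap.toMatrix' (W.1.subtype ∘ₗ codRestrict W.1 A.1.1.mulVecLin _) = A.1.1
    rw [subtype_comp_codRestrict, ← Matrix.toLin'_apply', LinearMap.toMatrix'_toLin']
  right_inv g := by
    apply Subtype.ext; apply LinearMap.ext; intro v; apply Subtype.ext
    show (LinearMap.toMatrix' (W.1.subtype ∘ₗ g.1)).mulVecLin v = (g.1 v : Fin b → F)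
    rw [hmv' (W.1.subtype ∘ₗ g.1)]; rfl

theorem surjCountW (b c r : ℕ) (F : Type) [Field F] [Fintype F]
    (W : Submodule F (Fin b → F)) (hW : finrank F W = r) :
    Nat.card {g : (Fin c → F) →ₗ[F] W // Function.Surjective g} =
      Nat.card {g : (Fin c → F) →ₗ[F] (Fin r → F) // Function.Surjective g} := by
  have eW : W ≃ₗ[F] (Fin r → F) := LinearEquiv.ofFinrankEq _ _ (by
    rw [hW, Module.finrank_fintype_fun_eq_card, Fintype.card_fin])
  refine Nat.card_congr {
    toFun := fun g => ⟨eW.toLinearMap ∘ₗ g.1, eW.surjective.comp g.2⟩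
    invFun := fun g => ⟨eW.symm.toLinearMap ∘ₗ g.1, eW.symm.surjective.comp g.2⟩
    left_inv := fun g => by apply Subtype.ext; apply LinearMap.ext; intro v; simp
    right_inv := fun g => by apply Subtype.ext; apply LinearMap.ext; intro v; simp }

theorem rankCount (b c r : ℕ) (hrc : r ≤ c) (F : Type) [Field F] [Fintype F] :
    Nat.card {A : Matrix (Fin b) (Fin c) F // A.rank = r} =
      Nat.card {W : Submodule F (Fin b → F) // finrank F W = r} *
        ∏ k ∈ Finset.range r, (Fintype.card F ^ c - Fintype.card F ^ k) := by
  classical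
  have e := (Equiv.sigmaFiberEquiv
    (fun A : {A : Matrix (Fin b) (Fin c) F // A.rank = r} =>
      (⟨LinearMap.range A.1.mulVecLin, A.2⟩ :
        {W : Submodule F (Fin b → F) // finrank F W = r}))).symm
  rw [Nat.card_congr e]
  have := Fintype.ofFinite {W : Submodule F (Fin b → F) // finrank F W = r}
  rw [nat_card_sigma', Finset.sum_congr rfl (fun W _ => by
    rw [Nat.card_congr (rankFiber b c r F W), surjCountW b c r F W.1 W.2,
      surjCount c r hrc F]), Finset.sum_const, Finset.card_univ,
    Nat.card_eq_fintype_card, smul_eq_mul]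

theorem castProd (x r : ℕ) (hrx : r ≤ x) (q : ℕ) (hq : 1 ≤ q) :
    ((∏ k ∈ Finset.range r, (q ^ x - q ^ k) : ℕ) : ℚ) =
      ∏ k ∈ Finset.range r, ((q : ℚ) ^ x - (q : ℚ) ^ k) := by
  rw [Nat.cast_prod]
  refine Finset.prod_congr rfl fun k hk => ?_
  rw [Nat.cast_sub (Nat.pow_le_pow_right hq
    (le_trans (le_of_lt (Finset.mem_range.1 hk)) hrx))]
  push_cast
  ring

end Aux

/-- The number of pairs of matrices (A,B) over F_q with AB = 0 equals
    ∑_{r=0}^{min(b,c)} (Q_r(b)·Q_r(c)/Q_r(r))·q^(d(c-r)). -/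
theorem stmt_0 (q b c d : ℕ) (hq : IsPrimePow q)
    (F : Type) [Field F] [Fintype F] (hF : Fintype.card F = q) :
    (Nat.card {p : Matrix (Fin b) (Fin c) F × Matrix (Fin c) (Fin d) F // p.1 * p.2 = 0} : ℚ) =
      ∑ r ∈ Finset.range (min b c + 1),
        ((∏ k ∈ Finset.range r, ((q : ℚ) ^ b - (q : ℚ) ^ k)) *
            (∏ k ∈ Finset.range r, ((q : ℚ) ^ c - (q : ℚ) ^ k)) /
            (∏ k ∈ Finset.range r, ((q : ℚ) ^ r - (q : ℚ) ^ k))) *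
          (q : ℚ) ^ (d * (c - r)) := by
  classical
  subst hF
  have hq2 : 1 < Fintype.card F := Fintype.one_lt_card
  set Q := Fintype.card F with hQ
  have e : {p : Matrix (Fin b) (Fin c) F × Matrix (Fin c) (Fin d) F // p.1 * p.2 = 0} ≃
      (A : Matrix (Fin b) (Fin c) F) × {B : Matrix (Fin c) (Fin d) F // A * B = 0} := {
    toFun := fun p => ⟨p.1.1, p.1.2, p.2⟩
    invFun := fun x => ⟨(x.1, x.2.1), x.2.2⟩
    left_inv := fun p => rfl
    right_inv := fun x => rfl }
  have h1 : Nat.card {p : Matrix (Fin b) (Fin c) F × Matrix (Fin c) (Fin d) F // p.1 * p.2 = 0}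
      = ∑ A : Matrix (Fin b) (Fin c) F, Q ^ (d * (c - A.rank)) := by
    rw [Nat.card_congr e, nat_card_sigma']
    exact Finset.sum_congr rfl fun A _ => lemA b c d F A
  have h2 : ∑ A : Matrix (Fin b) (Fin c) F, Q ^ (d * (c - A.rank)) =
      ∑ r ∈ Finset.range (min b c + 1),
        Nat.card {A : Matrix (Fin b) (Fin c) F // A.rank = r} * Q ^ (d * (c - r)) := by
    rw [← Finset.sum_fiberwise_of_maps_to (g := fun A : Matrix (Fin b) (Fin c) F => A.rank)
      (fun A _ => Finset.mem_range.2 (Nat.lt_succ_of_le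
        (le_min A.rank_le_height A.rank_le_width)))
      (fun A => Q ^ (d * (c - A.rank)))]
    refine Finset.sum_congr rfl fun r _ => ?_
    rw [Finset.sum_congr rfl (fun A hA => by rw [(Finset.mem_filter.1 hA).2]),
      Finset.sum_const, smul_eq_mul, Nat.card_eq_fintype_card, Fintype.card_subtype]
  rw [h1, h2, Nat.cast_sum]
  refine Finset.sum_congr rfl fun r hr => ?_
  have hrb : r ≤ b := le_trans (Nat.lt_succ_iff.1 (Finset.mem_range.1 hr)) (min_le_left b c)
  have hrc : r ≤ c := le_trans (Nat.lt_succ_iff.1 (Finset.mem_range.1 hr)) (min_le_right b c)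
  rw [Nat.cast_mul, Nat.cast_pow]
  congr 1
  -- (Nat.card {A // A.rank = r} : ℚ) = Qb * Qc / Qr
  have hA := rankCount b c r hrc F
  have hW := subCount b r hrb F
  have hQr0 : (∏ k ∈ Finset.range r, ((Q : ℚ) ^ r - (Q : ℚ) ^ k)) ≠ 0 := by
    refine Finset.prod_ne_zero_iff.2 fun k hk => ?_
    have : (Q : ℚ) ^ k < (Q : ℚ) ^ r :=
      pow_lt_pow_right₀ (by exact_mod_cast hq2) (Finset.mem_range.1 hk)
    linarith
  rw [eq_div_iff hQr0]
  have cb := castProd b r hrb Q (le_of_lt hq2)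
  have cc := castProd c r hrc Q (le_of_lt hq2)
  have cr := castProd r r le_rfl Q (le_of_lt hq2)
  calc (Nat.card {A : Matrix (Fin b) (Fin c) F // A.rank = r} : ℚ) *
        ∏ k ∈ Finset.range r, ((Q : ℚ) ^ r - (Q : ℚ) ^ k)
      = ((Nat.card {A : Matrix (Fin b) (Fin c) F // A.rank = r} *
          ∏ k ∈ Finset.range r, (Q ^ r - Q ^ k) : ℕ) : ℚ) := by
        rw [Nat.cast_mul, cr]
    _ = ((Nat.card {W : Submodule F (Fin b → F) // finrank F W = r} *
          (∏ k ∈ Finset.range r, (Q ^ c - Q ^ k)) *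
          ∏ k ∈ Finset.range r, (Q ^ r - Q ^ k) : ℕ) : ℚ) := by rw [hA]
    _ = ((Nat.card {W : Submodule F (Fin b → F) // finrank F W = r} *
          (∏ k ∈ Finset.range r, (Q ^ r - Q ^ k)) *
          ∏ k ∈ Finset.range r, (Q ^ c - Q ^ k) : ℕ) : ℚ) := by exact_mod_cast congrArg (Nat.cast (R := ℚ)) (by ring)
    _ = (((∏ k ∈ Finset.range r, (Q ^ b - Q ^ k)) *
          ∏ k ∈ Finset.range r, (Q ^ c - Q ^ k) : ℕ) : ℚ) := by rw [hW]
    _ = (∏ k ∈ Finset.range r, ((Q : ℚ) ^ b - (Q : ℚ) ^ k)) *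
          ∏ k ∈ Finset.range r, ((Q : ℚ) ^ c - (Q : ℚ) ^ k) := by
        rw [Nat.cast_mul, cb, cc]
end

section
/- There exists an absolute constant c₀ > 0 such that for every prime power q and all natural numbers b, c, d, the number ψ(b,c,d) of pairs (A,B) of a b×c matrix A and a c×d matrix B over F_q satisfying AB = 0 is at most c₀ · q^((b+c-d)²/4 + cd). -/
open Finset

lemma geom_bound (T : Finset ℕ) (φ : ℕ → ℕ) (hφ : Set.InjOn φ T) :
    ∑ r ∈ T, ((1:ℝ)/2) ^ (φ r) ≤ 2 := by
  calc ∑ r ∈ T, ((1:ℝ)/2) ^ (φ r)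
      = ∑ k ∈ T.image φ, ((1:ℝ)/2) ^ k :=
        (Finset.sum_image (fun x hx y hy h => hφ hx hy h)).symm
    _ ≤ ∑ k ∈ Finset.range ((T.image φ).sup id + 1), ((1:ℝ)/2) ^ k := by
        apply Finset.sum_le_sum_of_subset_of_nonneg
        · intro k hk
          exact Finset.mem_range.2 (Nat.lt_succ_of_le (Finset.le_sup (f := id) hk))
        · intros; positivity
    _ ≤ 2 := sum_geometric_two_le _

lemma sq_ge_toNat (k : ℕ) (a : ℝ) (hk : (k:ℝ) ≤ a) : (k:ℝ) ≤ a ^ 2 := by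
  rcases Nat.eq_zero_or_pos k with h | h
  · subst h; simpa using sq_nonneg a
  · have h1 : (1:ℝ) ≤ (k:ℝ) := by exact_mod_cast h
    nlinarith [sq_nonneg (a - k)]

lemma gauss_sum (N : Finset ℕ) (t : ℝ) :
    ∑ r ∈ N, (2:ℝ) ^ (-(((r:ℝ) - t)^2)) ≤ 4 := by
  set n : ℤ := ⌈t⌉ with hn
  set p : ℕ → Prop := fun r => n ≤ (r:ℤ) with hp
  have pow_eq : ∀ k : ℕ, (2:ℝ) ^ (-(k:ℝ)) = ((1:ℝ)/2) ^ k := by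
    intro k
    rw [Real.rpow_neg (by norm_num), Real.rpow_natCast]
    simp [one_div, inv_pow]
  have h1 : ∑ r ∈ N.filter p, (2:ℝ) ^ (-(((r:ℝ) - t)^2)) ≤ 2 := by
    refine le_trans (Finset.sum_le_sum (g := fun r : ℕ => ((1:ℝ)/2) ^ ((r:ℤ) - n).toNat)
      fun r hr => ?_) (geom_bound _ _ ?_)
    · have h : n ≤ (r:ℤ) := (Finset.mem_filter.1 hr).2
      have h0 : (0:ℤ) ≤ (r:ℤ) - n := by omega
      have hcast : ((((r:ℤ) - n).toNat : ℕ) : ℝ) = (r:ℝ) - (n:ℝ) := by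
        exact_mod_cast congrArg (fun z : ℤ => (z:ℝ)) (Int.toNat_of_nonneg h0)
      have htn : t ≤ (n:ℝ) := Int.le_ceil t
      have hle : ((((r:ℤ) - n).toNat : ℕ) : ℝ) ≤ ((r:ℝ) - t) := by
        rw [hcast]; linarith
      have := sq_ge_toNat _ _ hle
      show (2:ℝ) ^ (-(((r:ℝ) - t)^2)) ≤ ((1:ℝ)/2) ^ ((r:ℤ) - n).toNat
      rw [← pow_eq]
      exact Real.rpow_le_rpow_of_exponent_le one_le_two (by linarith)
    · intro x hx y hy hxy
      have hx' := (Finset.mem_filter.1 hx).2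
      have hy' := (Finset.mem_filter.1 hy).2
      have hxy' : ((x:ℤ) - n).toNat = ((y:ℤ) - n).toNat := hxy
      simp only [hp] at hx' hy'
      omega
  have h2 : ∑ r ∈ N.filter (fun r => ¬ p r), (2:ℝ) ^ (-(((r:ℝ) - t)^2)) ≤ 2 := by
    refine le_trans (Finset.sum_le_sum (g := fun r : ℕ => ((1:ℝ)/2) ^ (n - 1 - (r:ℤ)).toNat)
      fun r hr => ?_) (geom_bound _ _ ?_)
    · have h : ¬ n ≤ (r:ℤ) := (Finset.mem_filter.1 hr).2
      have h0 : (0:ℤ) ≤ n - 1 - (r:ℤ) := by omega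
      have hcast : (((n - 1 - (r:ℤ)).toNat : ℕ) : ℝ) = (n:ℝ) - 1 - (r:ℝ) := by
        exact_mod_cast congrArg (fun z : ℤ => (z:ℝ)) (Int.toNat_of_nonneg h0)
      have htn : (n:ℝ) - 1 < t := by
        have := Int.ceil_lt_add_one t
        have : (n:ℝ) < t + 1 := by exact_mod_cast this
        linarith
      have hle : (((n - 1 - (r:ℤ)).toNat : ℕ) : ℝ) ≤ (t - (r:ℝ)) := by
        rw [hcast]; linarith
      have := sq_ge_toNat _ _ hle
      have hsq : ((r:ℝ) - t)^2 = (t - (r:ℝ))^2 := by ring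
      show (2:ℝ) ^ (-(((r:ℝ) - t)^2)) ≤ ((1:ℝ)/2) ^ (n - 1 - (r:ℤ)).toNat
      rw [← pow_eq]
      exact Real.rpow_le_rpow_of_exponent_le one_le_two (by rw [hsq]; linarith)
    · intro x hx y hy hxy
      have hx' := (Finset.mem_filter.1 hx).2
      have hy' := (Finset.mem_filter.1 hy).2
      have hxy' : (n - 1 - (x:ℤ)).toNat = (n - 1 - (y:ℤ)).toNat := hxy
      simp only [hp] at hx' hy'
      omega
  have := Finset.sum_filter_add_sum_filter_not N p (fun r => (2:ℝ) ^ (-(((r:ℝ) - t)^2)))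
  linarith

lemma prod_one_sub_half_pow (r : ℕ) :
    (1:ℝ)/4 + (1/2)^(r+1) ≤ ∏ j ∈ Finset.range r, (1 - (1/2:ℝ)^(j+1)) := by
  induction r with
  | zero => norm_num
  | succ r ih =>
      rcases Nat.eq_zero_or_pos r with hr | hr
      · subst hr; norm_num
      rw [Finset.prod_range_succ]
      have hy : (0:ℝ) < (1/2:ℝ)^(r+2) := by positivity
      have hy4 : ((1/2:ℝ))^(r+2) ≤ 1/8 := by
        calc ((1/2:ℝ))^(r+2) ≤ (1/2:ℝ)^3 := by
              apply pow_le_pow_of_le_one (by norm_num) (by norm_num); omega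
          _ = 1/8 := by norm_num
      have h2 : ((1/2:ℝ))^(r+1) = 2 * (1/2:ℝ)^(r+2) := by
        rw [pow_succ]; ring
      nlinarith [ih, hy, hy4]

lemma prod_one_sub_half_pow' (r : ℕ) :
    (1:ℝ)/4 ≤ ∏ j ∈ Finset.range r, (1 - (1/2:ℝ)^(j+1)) := by
  have := prod_one_sub_half_pow r
  have : (0:ℝ) < (1/2:ℝ)^(r+1) := by positivity
  linarith [prod_one_sub_half_pow r]

open LinearMap

variable {F : Type} [Field F] [Fintype F]

/-- counting subspaces times independent tuples -/
lemma subspace_count (b r : ℕ) :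
    Nat.card {V : Submodule F (Fin b → F) // Module.finrank F V = r} *
      ∏ i : Fin r, (Fintype.card F ^ r - Fintype.card F ^ (i:ℕ)) ≤
    Fintype.card F ^ (r * b) := by
  classical
  have hfin : Finite (Submodule F (Fin b → F)) :=
    Finite.of_injective _ (SetLike.coe_injective (A := Submodule F (Fin b → F)))
  -- the injection
  set T := (Σ V : {V : Submodule F (Fin b → F) // Module.finrank F V = r},
      {s : Fin r → V.1 // LinearIndependent F s}) with hT
  have span_eq : ∀ (V : {V : Submodule F (Fin b → F) // Module.finrank F V = r})
      (s : {s : Fin r → V.1 // LinearIndependent F s}),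
      Submodule.span F (Set.range (fun i => ((s.1 i : Fin b → F)))) = V.1 := by
    intro V s
    have hLI : LinearIndependent F (fun i => ((s.1 i : Fin b → F))) :=
      s.2.map' V.1.subtype (Submodule.ker_subtype V.1)
    have hle : Submodule.span F (Set.range (fun i => ((s.1 i : Fin b → F)))) ≤ V.1 := by
      rw [Submodule.span_le]
      rintro x ⟨i, rfl⟩
      exact (s.1 i).2
    have hfr : Module.finrank F
        (Submodule.span F (Set.range (fun i => ((s.1 i : Fin b → F))))) = r := by
      rw [finrank_span_eq_card hLI, Fintype.card_fin]
    exact Submodule.eq_of_le_of_finrank_eq hle (by rw [hfr, V.2])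
  have hinj : Function.Injective
      (fun x : T => (fun i => ((x.2.1 i : Fin b → F)) : Fin r → (Fin b → F))) := by
    rintro ⟨V, s⟩ ⟨W, t⟩ h
    simp only at h
    have hV : V = W := by
      apply Subtype.ext
      rw [← span_eq V s, ← span_eq W t, h]
    subst hV
    have hs : s = t := by
      apply Subtype.ext
      funext i
      exact Subtype.ext (congrFun h i)
    rw [hs]
  have hcard : Nat.card T ≤ Nat.card (Fin r → (Fin b → F)) :=
    Nat.card_le_card_of_injective _ hinj
  have hfun : Nat.card (Fin r → (Fin b → F)) = Fintype.card F ^ (r * b) := by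
    rw [Nat.card_fun, Nat.card_fun, Nat.card_eq_fintype_card (α := F),
      Nat.card_eq_fintype_card (α := Fin b), Nat.card_eq_fintype_card (α := Fin r),
      Fintype.card_fin, Fintype.card_fin, ← pow_mul, mul_comm b r]
  -- card of T as a product
  have hT2 : Nat.card T = Nat.card {V : Submodule F (Fin b → F) // Module.finrank F V = r} *
      ∏ i : Fin r, (Fintype.card F ^ r - Fintype.card F ^ (i:ℕ)) := by
    haveI : Fintype {V : Submodule F (Fin b → F) // Module.finrank F V = r} :=
      Fintype.ofFinite _
    haveI : ∀ V : {V : Submodule F (Fin b → F) // Module.finrank F V = r},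
        Fintype {s : Fin r → V.1 // LinearIndependent F s} := fun V => Fintype.ofFinite _
    rw [hT, Nat.card_eq_fintype_card, Fintype.card_sigma]
    rw [Nat.card_eq_fintype_card]
    have : ∀ V : {V : Submodule F (Fin b → F) // Module.finrank F V = r},
        Fintype.card {s : Fin r → V.1 // LinearIndependent F s} =
        ∏ i : Fin r, (Fintype.card F ^ r - Fintype.card F ^ (i:ℕ)) := by
      intro V
      have := card_linearIndependent (K := F) (V := V.1) (k := r) (by rw [V.2])
      rw [Nat.card_eq_fintype_card] at this
      rw [this, V.2]
    rw [Finset.sum_congr rfl (fun V _ => this V), Finset.sum_const, Finset.card_univ,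
      smul_eq_mul]
  rw [← hT2, ← hfun]
  exact hcard

lemma rank_count (b c r : ℕ) :
    Nat.card {A : Matrix (Fin b) (Fin c) F //
        Module.finrank F (LinearMap.range A.mulVecLin) = r} ≤
    Nat.card {V : Submodule F (Fin b → F) // Module.finrank F V = r} *
      Fintype.card F ^ (r * c) := by
  classical
  set T := (Σ V : {V : Submodule F (Fin b → F) // Module.finrank F V = r},
      (Fin c → V.1)) with hT
  set Ψ : {A : Matrix (Fin b) (Fin c) F //
      Module.finrank F (LinearMap.range A.mulVecLin) = r} → T :=
    fun A => ⟨⟨LinearMap.range A.1.mulVecLin, A.2⟩,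
      fun j => ⟨A.1.mulVec (Pi.single j 1), LinearMap.mem_range.2 ⟨Pi.single j 1, rfl⟩⟩⟩ with hΨ
  have hinj : Function.Injective Ψ := by
    intro A A' h
    have h2 := congrArg (fun x : T => (fun j => ((x.2 j : Fin b → F)) : Fin c → (Fin b → F))) h
    simp only [Ψ] at h2
    apply Subtype.ext
    ext i j
    have := congrFun (congrFun h2 j) i
    simpa [Matrix.mulVec_single_one] using this
  have hcard := Nat.card_le_card_of_injective _ hinj
  have hTcard : Nat.card T = Nat.card {V : Submodule F (Fin b → F) //
      Module.finrank F V = r} * Fintype.card F ^ (r * c) := by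
    haveI hfin : Finite (Submodule F (Fin b → F)) :=
      Finite.of_injective _ (SetLike.coe_injective (A := Submodule F (Fin b → F)))
    haveI : Fintype {V : Submodule F (Fin b → F) // Module.finrank F V = r} :=
      Fintype.ofFinite _
    haveI : ∀ V : {V : Submodule F (Fin b → F) // Module.finrank F V = r},
        Fintype V.1 := fun V => Fintype.ofFinite _
    rw [hT, Nat.card_eq_fintype_card, Fintype.card_sigma, Nat.card_eq_fintype_card]
    have : ∀ V : {V : Submodule F (Fin b → F) // Module.finrank F V = r},
        Fintype.card (Fin c → V.1) = Fintype.card F ^ (r * c) := by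
      intro V
      rw [Fintype.card_fun, Module.card_eq_pow_finrank (K := F) (V := V.1), V.2,
        Fintype.card_fin, ← pow_mul]
    rw [Finset.sum_congr rfl (fun V _ => this V), Finset.sum_const, Finset.card_univ,
      smul_eq_mul]
  rw [← hTcard]
  exact hcard

lemma fiber_card {b c : ℕ} (d : ℕ) (A : Matrix (Fin b) (Fin c) F) :
    Nat.card {B : Matrix (Fin c) (Fin d) F // A * B = 0} =
      Fintype.card F ^ (d * (c - Module.finrank F (LinearMap.range A.mulVecLin))) := by
  classical
  have e : {B : Matrix (Fin c) (Fin d) F // A * B = 0} ≃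
      (Fin d → LinearMap.ker A.mulVecLin) := by
    refine ⟨fun B j => ⟨fun k => B.1 k j, LinearMap.mem_ker.2 ?_⟩,
      fun g => ⟨Matrix.of (fun k j => (g j).1 k), ?_⟩,
      fun B => ?_, fun g => ?_⟩
    · rw [Matrix.mulVecLin_apply]
      funext i
      have := congrFun (congrFun B.2 i) j
      simpa [Matrix.mul_apply, Matrix.mulVec, dotProduct] using this
    · ext i j
      have h0 : A.mulVecLin ((g j).1) = 0 := LinearMap.mem_ker.1 (g j).2
      rw [Matrix.mulVecLin_apply] at h0
      have := congrFun h0 i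
      simpa [Matrix.mul_apply, Matrix.mulVec, dotProduct] using this
    · apply Subtype.ext; rfl
    · funext j; apply Subtype.ext; rfl
  rw [Nat.card_congr e, Nat.card_fun, Nat.card_eq_fintype_card (α := Fin d), Fintype.card_fin]
  haveI : Fintype (LinearMap.ker A.mulVecLin) := Fintype.ofFinite _
  have hk : Nat.card (LinearMap.ker A.mulVecLin) =
      Fintype.card F ^ (Module.finrank F (LinearMap.ker A.mulVecLin)) := by
    rw [Nat.card_eq_fintype_card]
    exact Module.card_eq_pow_finrank
  have hrn : Module.finrank F (LinearMap.range A.mulVecLin) +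
      Module.finrank F (LinearMap.ker A.mulVecLin) = c := by
    have := LinearMap.finrank_range_add_finrank_ker A.mulVecLin
    rwa [Module.finrank_pi, Fintype.card_fin] at this
  have heq : Module.finrank F (LinearMap.ker A.mulVecLin) =
      c - Module.finrank F (LinearMap.range A.mulVecLin) := by omega
  rw [hk, heq, ← pow_mul, mul_comm]

lemma psi_eq (b c d : ℕ) :
    Nat.card {p : Matrix (Fin b) (Fin c) F × Matrix (Fin c) (Fin d) F // p.1 * p.2 = 0} =
      ∑ r ∈ Finset.range (c+1),
        Nat.card {A : Matrix (Fin b) (Fin c) F //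
            Module.finrank F (LinearMap.range A.mulVecLin) = r} *
          Fintype.card F ^ (d * (c - r)) := by
  classical
  have e := Equiv.subtypeProdEquivSigmaSubtype
    (fun (A : Matrix (Fin b) (Fin c) F) (B : Matrix (Fin c) (Fin d) F) => A * B = 0)
  rw [Nat.card_congr e, Nat.card_eq_fintype_card, Fintype.card_sigma]
  have step1 : ∀ A : Matrix (Fin b) (Fin c) F,
      Fintype.card {B : Matrix (Fin c) (Fin d) F // A * B = 0} =
        Fintype.card F ^ (d * (c - Module.finrank F (LinearMap.range A.mulVecLin))) := by
    intro A
    rw [← Nat.card_eq_fintype_card]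
    exact fiber_card d A
  rw [Finset.sum_congr rfl (fun A _ => step1 A)]
  have hmaps : ∀ A : Matrix (Fin b) (Fin c) F, A ∈ Finset.univ →
      Module.finrank F (LinearMap.range A.mulVecLin) ∈ Finset.range (c+1) := by
    intro A _
    rw [Finset.mem_range, Nat.lt_succ_iff]
    have := LinearMap.finrank_range_le A.mulVecLin
    rwa [Module.finrank_pi, Fintype.card_fin] at this
  rw [← Finset.sum_fiberwise_of_maps_to hmaps
    (fun A => Fintype.card F ^ (d * (c - Module.finrank F (LinearMap.range A.mulVecLin))))]
  apply Finset.sum_congr rfl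
  intro r _
  have : ∀ A ∈ Finset.univ.filter
      (fun A : Matrix (Fin b) (Fin c) F =>
        Module.finrank F (LinearMap.range A.mulVecLin) = r),
      Fintype.card F ^ (d * (c - Module.finrank F (LinearMap.range A.mulVecLin))) =
        Fintype.card F ^ (d * (c - r)) := by
    intro A hA
    rw [(Finset.mem_filter.1 hA).2]
  rw [Finset.sum_congr rfl this, Finset.sum_const, smul_eq_mul]
  congr 1
  rw [Nat.card_eq_fintype_card, Fintype.card_subtype]

lemma Nr_bound (b c r : ℕ) :
    (Nat.card {A : Matrix (Fin b) (Fin c) F //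
        Module.finrank F (LinearMap.range A.mulVecLin) = r} : ℝ) *
      ((Fintype.card F : ℝ)) ^ (r*r) ≤ 4 * (Fintype.card F : ℝ) ^ (r*b + r*c) := by
  classical
  set q := Fintype.card F with hq
  have hq2 : 2 ≤ q := Fintype.one_lt_card
  have hX : (2:ℝ) ≤ (q:ℝ) := by exact_mod_cast hq2
  have hX0 : (0:ℝ) < (q:ℝ) := by linarith
  set N := Nat.card {A : Matrix (Fin b) (Fin c) F //
      Module.finrank F (LinearMap.range A.mulVecLin) = r} with hN
  set G := Nat.card {V : Submodule F (Fin b → F) // Module.finrank F V = r} with hG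
  set P := ∏ i : Fin r, (q ^ r - q ^ (i:ℕ)) with hP
  have h1 : N ≤ G * q ^ (r * c) := rank_count b c r
  have h2 : G * P ≤ q ^ (r * b) := subspace_count b r
  have hNP : N * P ≤ q ^ (r * b + r * c) := by
    calc N * P ≤ (G * q ^ (r * c)) * P := Nat.mul_le_mul_right _ h1
      _ = (G * P) * q ^ (r * c) := by ring
      _ ≤ q ^ (r * b) * q ^ (r * c) := Nat.mul_le_mul_right _ h2
      _ = q ^ (r * b + r * c) := (pow_add _ _ _).symm
  have hNPR : (N:ℝ) * (P:ℝ) ≤ (q:ℝ) ^ (r * b + r * c) := by exact_mod_cast hNP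
  -- lower bound for P
  have hPcast : (P:ℝ) = ∏ i ∈ Finset.range r, ((q:ℝ)^r - (q:ℝ)^i) := by
    rw [hP, Nat.cast_prod, Fin.prod_univ_eq_prod_range
      (fun i => ((q ^ r - q ^ i : ℕ) : ℝ))]
    apply Finset.prod_congr rfl
    intro i hi
    have hle : q ^ i ≤ q ^ r :=
      Nat.pow_le_pow_right (by omega) (le_of_lt (Finset.mem_range.1 hi))
    push_cast [Nat.cast_sub hle]
    ring
  have hPlow : (q:ℝ) ^ (r*r) / 4 ≤ (P:ℝ) := by
    rw [hPcast]
    have hstep : ∀ i ∈ Finset.range r,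
        (q:ℝ)^r * (1 - (1/2:ℝ)^(r - i)) ≤ (q:ℝ)^r - (q:ℝ)^i := by
      intro i hi
      have hir : i < r := Finset.mem_range.1 hi
      have key : (q:ℝ)^i ≤ (q:ℝ)^r * (1/2:ℝ)^(r - i) := by
        have h2le : (2:ℝ)^(r-i) ≤ (q:ℝ)^(r-i) :=
          pow_le_pow_left₀ (by norm_num) hX _
        have hsplit : (q:ℝ)^r = (q:ℝ)^i * (q:ℝ)^(r-i) := by
          rw [← pow_add]; congr 1; omega
        have hpos : (0:ℝ) < (q:ℝ)^i := by positivity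
        rw [hsplit]
        rw [mul_assoc, one_div, inv_pow, le_mul_iff_one_le_right hpos,
          ← div_eq_mul_inv, le_div_iff₀ (by positivity), one_mul]
        exact h2le
      nlinarith [key]
    have hnn : ∀ i ∈ Finset.range r, (0:ℝ) ≤ (q:ℝ)^r * (1 - (1/2:ℝ)^(r - i)) := by
      intro i hi
      have : ((1/2:ℝ))^(r-i) ≤ 1 := pow_le_one₀ (by norm_num) (by norm_num)
      have : (0:ℝ) ≤ 1 - (1/2:ℝ)^(r-i) := by linarith
      positivity
    have hprod : ∏ i ∈ Finset.range r, ((q:ℝ)^r * (1 - (1/2:ℝ)^(r - i))) ≤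
        ∏ i ∈ Finset.range r, ((q:ℝ)^r - (q:ℝ)^i) :=
      Finset.prod_le_prod hnn hstep
    have hsplit : ∏ i ∈ Finset.range r, ((q:ℝ)^r * (1 - (1/2:ℝ)^(r - i))) =
        (q:ℝ)^(r*r) * ∏ i ∈ Finset.range r, (1 - (1/2:ℝ)^(r - i)) := by
      rw [Finset.prod_mul_distrib, Finset.prod_const, Finset.card_range, ← pow_mul]
    have hreflect : ∏ i ∈ Finset.range r, (1 - (1/2:ℝ)^(r - i)) =
        ∏ j ∈ Finset.range r, (1 - (1/2:ℝ)^(j + 1)) := by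
      rw [← Finset.prod_range_reflect (fun j => 1 - (1/2:ℝ)^(j+1)) r]
      apply Finset.prod_congr rfl
      intro i hi
      have : r - 1 - i + 1 = r - i := by
        have := Finset.mem_range.1 hi; omega
      rw [this]
    have h14 := prod_one_sub_half_pow' r
    rw [hreflect] at hsplit
    have hqrr : (0:ℝ) ≤ (q:ℝ)^(r*r) := by positivity
    calc (q:ℝ)^(r*r)/4 = (q:ℝ)^(r*r) * (1/4) := by ring
      _ ≤ (q:ℝ)^(r*r) * ∏ j ∈ Finset.range r, (1 - (1/2:ℝ)^(j + 1)) := by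
          apply mul_le_mul_of_nonneg_left _ hqrr
          linarith
      _ = ∏ i ∈ Finset.range r, ((q:ℝ)^r * (1 - (1/2:ℝ)^(r - i))) := hsplit.symm
      _ ≤ _ := hprod
  have hN0 : (0:ℝ) ≤ (N:ℝ) := Nat.cast_nonneg _
  calc (N:ℝ) * (q:ℝ)^(r*r) ≤ (N:ℝ) * (4 * (P:ℝ)) := by
        apply mul_le_mul_of_nonneg_left _ hN0
        linarith
    _ = 4 * ((N:ℝ) * (P:ℝ)) := by ring
    _ ≤ 4 * (q:ℝ)^(r*b + r*c) := by linarith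

/-- There is an absolute constant c₀ > 0 with
    ψ(b,c,d) ≤ c₀ · q^((b+c-d)²/4 + cd) for all prime powers q. -/
theorem stmt_2 :
    ∃ c₀ : ℝ, 0 < c₀ ∧
      ∀ (q b c d : ℕ), IsPrimePow q →
        ∀ (F : Type) [Field F] [Fintype F], Fintype.card F = q →
          (Nat.card {p : Matrix (Fin b) (Fin c) F × Matrix (Fin c) (Fin d) F //
              p.1 * p.2 = 0} : ℝ) ≤
            c₀ * (q : ℝ) ^ ((((b : ℝ) + c - d) ^ 2) / 4 + (c : ℝ) * d) := by
  refine ⟨16, by norm_num, ?_⟩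
  intro q b c d _ F _ _ hF
  subst hF
  classical
  set q := Fintype.card F with hqdef
  have hq2 : 2 ≤ q := Fintype.one_lt_card
  have hX : (2:ℝ) ≤ (q:ℝ) := by exact_mod_cast hq2
  have hX0 : (0:ℝ) < (q:ℝ) := by linarith
  set t : ℝ := ((b:ℝ) + c - d) / 2 with ht
  set E : ℝ := (((b : ℝ) + c - d) ^ 2) / 4 + (c : ℝ) * d with hE
  rw [psi_eq b c d]
  push_cast
  have key : ∀ r ∈ Finset.range (c+1),
      (Nat.card {A : Matrix (Fin b) (Fin c) F //
          Module.finrank F (LinearMap.range A.mulVecLin) = r} : ℝ) *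
        (q:ℝ) ^ (d * (c - r)) ≤
      4 * (q:ℝ) ^ E * (2:ℝ) ^ (-(((r:ℝ) - t)^2)) := by
    intro r hr
    have hrc : r ≤ c := Nat.lt_succ_iff.1 (Finset.mem_range.1 hr)
    set N := (Nat.card {A : Matrix (Fin b) (Fin c) F //
        Module.finrank F (LinearMap.range A.mulVecLin) = r} : ℝ) with hNdef
    have h1 : N * (q:ℝ)^(r*r) ≤ 4 * (q:ℝ)^(r*b + r*c) := Nr_bound b c r
    have hN0 : (0:ℝ) ≤ N := Nat.cast_nonneg _
    have hrr : (0:ℝ) < (q:ℝ)^(r*r) := by positivity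
    have h2 : N ≤ 4 * (q:ℝ)^(r*b + r*c) / (q:ℝ)^(r*r) := by
      rw [le_div_iff₀ hrr]; exact h1
    calc N * (q:ℝ) ^ (d * (c - r))
        ≤ (4 * (q:ℝ)^(r*b + r*c) / (q:ℝ)^(r*r)) * (q:ℝ) ^ (d * (c - r)) := by
          apply mul_le_mul_of_nonneg_right h2 (by positivity)
      _ = 4 * (q:ℝ) ^ (((r*b + r*c : ℕ) : ℝ) - ((r*r : ℕ) : ℝ) + ((d * (c - r) : ℕ) : ℝ)) := by
          rw [Real.rpow_add hX0, Real.rpow_sub hX0,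
            Real.rpow_natCast, Real.rpow_natCast, Real.rpow_natCast]
          ring
      _ = 4 * (q:ℝ) ^ (E + (-(((r:ℝ) - t)^2))) := by
          congr 1
          push_cast [Nat.cast_sub hrc]
          rw [hE, ht]
          ring
      _ = 4 * ((q:ℝ) ^ E * (q:ℝ) ^ (-(((r:ℝ) - t)^2))) := by
          rw [Real.rpow_add hX0]
      _ ≤ 4 * ((q:ℝ) ^ E * (2:ℝ) ^ (-(((r:ℝ) - t)^2))) := by
          have hw : (0:ℝ) ≤ ((r:ℝ) - t)^2 := sq_nonneg _
          have hmono : (q:ℝ) ^ (-(((r:ℝ) - t)^2)) ≤ (2:ℝ) ^ (-(((r:ℝ) - t)^2)) := by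
            rw [Real.rpow_neg (le_of_lt hX0), Real.rpow_neg (by norm_num : (0:ℝ) ≤ 2)]
            apply inv_anti₀ (by positivity)
            exact Real.rpow_le_rpow (by norm_num) hX hw
          have hqE : (0:ℝ) ≤ (q:ℝ) ^ E := le_of_lt (Real.rpow_pos_of_pos hX0 E)
          nlinarith [hqE, hmono]
      _ = 4 * (q:ℝ) ^ E * (2:ℝ) ^ (-(((r:ℝ) - t)^2)) := by ring
  calc ∑ r ∈ Finset.range (c+1),
        (Nat.card {A : Matrix (Fin b) (Fin c) F //
            Module.finrank F (LinearMap.range A.mulVecLin) = r} : ℝ) *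
          (q:ℝ) ^ (d * (c - r))
      ≤ ∑ r ∈ Finset.range (c+1), 4 * (q:ℝ) ^ E * (2:ℝ) ^ (-(((r:ℝ) - t)^2)) :=
        Finset.sum_le_sum key
    _ = 4 * (q:ℝ) ^ E * ∑ r ∈ Finset.range (c+1), (2:ℝ) ^ (-(((r:ℝ) - t)^2)) := by
        rw [Finset.mul_sum]
    _ ≤ 4 * (q:ℝ) ^ E * 4 := by
        apply mul_le_mul_of_nonneg_left (gauss_sum _ t)
        have := Real.rpow_pos_of_pos hX0 E
        linarith
    _ = 16 * (q:ℝ) ^ E := by ring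
end

section
/- Let G be a finite group acting transitively on a finite set Ω, let K ≤ G be a subgroup, and let ω ∈ Ω with stabilizer R = G_ω. Then |{K^t : t ∈ G, K^t ≤ R}| / |K^G| = fix(K,Ω)/|Ω|, where fix(K,Ω) is the number of points of Ω fixed by every element of K and K^G is the set of G-conjugates of K. -/
/-- |{K^t : t ∈ G, K^t ≤ R}| / |K^G| = fix(K,Ω)/|Ω| for a point stabilizer R. -/
theorem stmt_10 (G : Type) [Group G] [Fintype G] (Ω : Type) [Fintype Ω] [Nonempty Ω]
    [MulAction G Ω] [MulAction.IsPretransitive G Ω] (K : Subgroup G) (ω : Ω) :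
    (Nat.card {H : Subgroup G |
        (∃ t : G, H = K.map (MulAut.conj t).toMonoidHom) ∧ H ≤ MulAction.stabilizer G ω} : ℚ) /
        Nat.card {H : Subgroup G | ∃ t : G, H = K.map (MulAut.conj t).toMonoidHom} =
      (Nat.card {w : Ω // ∀ k ∈ K, k • w = w} : ℚ) / Nat.card Ω := by
  classical
  set R := MulAction.stabilizer G ω with hR
  set N := Subgroup.normalizer (K : Set G) with hN
  set f : G → Subgroup G := fun t => K.map (MulAut.conj t).toMonoidHom with hf
  simp only [show ∀ t : G, K.map (MulAut.conj t).toMonoidHom = f t from fun _ => rfl]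
  -- membership in a conjugate
  have hmem : ∀ (t x : G), x ∈ f t ↔ t⁻¹ * x * t ∈ K := by
    intro t x
    simp only [hf, Subgroup.mem_map_equiv, MulAut.conj_symm_apply]
  -- f h = K iff h normalizes K
  have hfK : ∀ h : G, f h = K ↔ h ∈ N := by
    intro h
    rw [hN, Subgroup.mem_normalizer_iff'', SetLike.ext_iff]
    simp only [hmem]
    exact ⟨fun he x => (he x).symm, fun he x => (he x).symm⟩
  -- key : conjugates agree iff same coset of N
  have key : ∀ s t : G, f s = f t ↔ (s : G ⧸ N) = (t : G ⧸ N) := by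
    intro s t
    rw [QuotientGroup.eq, ← hfK, SetLike.ext_iff, SetLike.ext_iff]
    simp only [hmem]
    constructor
    · intro h x
      have h1 := h (s * x * s⁻¹)
      rw [show s⁻¹ * (s * x * s⁻¹) * s = x by group] at h1
      rw [show (s⁻¹ * t)⁻¹ * x * (s⁻¹ * t) = t⁻¹ * (s * x * s⁻¹) * t by group]
      exact h1.symm
    · intro h x
      have h1 := h (s⁻¹ * x * s)
      rw [show (s⁻¹ * t)⁻¹ * (s⁻¹ * x * s) * (s⁻¹ * t) = t⁻¹ * x * t by group] at h1
      exact h1.symm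
  -- induced injective map on the quotient
  set fbar : G ⧸ N → Subgroup G := fun x => f x.out with hfbar_def
  have hfbar : ∀ t : G, fbar (t : G ⧸ N) = f t := by
    intro t
    exact (key _ _).mpr (Quotient.out_eq' _)
  have hinj : Function.Injective fbar := by
    intro x y h
    obtain ⟨a, rfl⟩ := QuotientGroup.mk_surjective x
    obtain ⟨b, rfl⟩ := QuotientGroup.mk_surjective y
    rw [hfbar, hfbar] at h
    exact (key a b).mp h
  set P : Set (G ⧸ N) := {x | fbar x ≤ R} with hP
  -- counting conjugates contained in R
  have c1 : Nat.card {H : Subgroup G | (∃ t : G, H = f t) ∧ H ≤ R} = Nat.card P := by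
    refine (Nat.card_congr (Equiv.ofBijective
      (fun x => ⟨fbar x.1, ⟨x.1.out, rfl⟩, x.2⟩) ⟨?_, ?_⟩)).symm
    · intro x y h
      exact Subtype.ext (hinj (congrArg Subtype.val h))
    · rintro ⟨H, ⟨t, ht⟩, hle⟩
      refine ⟨⟨(t : G ⧸ N), show fbar _ ≤ R by rw [hfbar, ← ht]; exact hle⟩, ?_⟩
      exact Subtype.ext (by simpa [hfbar] using ht.symm)
  -- counting all conjugates
  have c2 : Nat.card {H : Subgroup G | ∃ t : G, H = f t} = Nat.card (G ⧸ N) := by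
    refine (Nat.card_congr (Equiv.ofBijective
      (fun x => ⟨fbar x, x.out, rfl⟩) ⟨?_, ?_⟩)).symm
    · intro x y h
      exact hinj (congrArg Subtype.val h)
    · rintro ⟨H, t, ht⟩
      exact ⟨(t : G ⧸ N), Subtype.ext (by simpa [hfbar] using ht.symm)⟩
  -- preimage of P in G
  have c3 : Nat.card (QuotientGroup.mk ⁻¹' P) = Nat.card N * Nat.card P := by
    rw [Nat.card_congr (QuotientGroup.preimageMkEquivSubgroupProdSet N P), Nat.card_prod]
  have c4 : Nat.card G = Nat.card N * Nat.card (G ⧸ N) := by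
    rw [← Subgroup.index_eq_card, ← Subgroup.card_mul_index N]
  -- fixed points
  set F : Set Ω := {w | ∀ k ∈ K, k • w = w} with hF
  have hcond : ∀ t : G, f t ≤ R ↔ t⁻¹ • ω ∈ F := by
    intro t
    constructor
    · intro h k hk
      have hx : (t * k * t⁻¹) • ω = ω :=
        h ((hmem t _).mpr (by rwa [show t⁻¹ * (t * k * t⁻¹) * t = k by group]))
      rw [mul_smul, mul_smul] at hx
      exact (inv_smul_eq_iff.mpr hx.symm).symm
    · intro h x hx
      have hk := h _ ((hmem t x).mp hx)
      show x • ω = ω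
      conv_lhs => rw [show x = t * (t⁻¹ * x * t) * t⁻¹ by group]
      rw [mul_smul, mul_smul, hk, smul_inv_smul]
  -- count of the preimage via fixed points
  have e3 : ∀ w : F, {t : G // t⁻¹ • ω = (w : Ω)} ≃ R := by
    intro w
    let t₀ : G := (MulAction.exists_smul_eq G (w : Ω) ω).choose
    have ht₀ : t₀ • (w : Ω) = ω := (MulAction.exists_smul_eq G (w : Ω) ω).choose_spec
    have ht₀' : t₀⁻¹ • ω = (w : Ω) := inv_smul_eq_iff.mpr ht₀.symm
    refine ⟨fun t => ⟨t.1 * t₀⁻¹, ?_⟩, fun s => ⟨s.1 * t₀, ?_⟩, ?_, ?_⟩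
    · show (t.1 * t₀⁻¹) • ω = ω
      rw [mul_smul, ht₀']
      exact (inv_smul_eq_iff.mp t.2).symm
    · have hs : (s : G)⁻¹ • ω = ω := inv_smul_eq_iff.mpr s.2.symm
      rw [mul_inv_rev, mul_smul, hs, ht₀']
    · intro t
      exact Subtype.ext (by simp [mul_assoc])
    · intro s
      exact Subtype.ext (by simp [mul_assoc])
  have c5 : Nat.card (QuotientGroup.mk ⁻¹' P) = Nat.card F * Nat.card R := by
    have e1 : (QuotientGroup.mk ⁻¹' P : Set G) ≃ {t : G // t⁻¹ • ω ∈ F} :=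
      Equiv.subtypeEquivRight (fun t => by
        show fbar (t : G ⧸ N) ≤ R ↔ _
        rw [hfbar, hcond])
    let g : {t : G // t⁻¹ • ω ∈ F} → F := fun t => ⟨t.1⁻¹ • ω, t.2⟩
    have efib : ∀ w : F, {t : {t : G // t⁻¹ • ω ∈ F} // g t = w} ≃ {t : G // t⁻¹ • ω = (w : Ω)} :=
      fun w =>
        ⟨fun t => ⟨t.1.1, congrArg Subtype.val t.2⟩,
         fun t => ⟨⟨t.1, by rw [t.2]; exact w.2⟩, Subtype.ext t.2⟩,
         fun t => Subtype.ext (Subtype.ext rfl), fun t => rfl⟩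
    calc Nat.card (QuotientGroup.mk ⁻¹' P)
        = Nat.card (F × R) := Nat.card_congr
          ((e1.trans (Equiv.sigmaFiberEquiv g).symm).trans
            ((Equiv.sigmaCongrRight (fun w => (efib w).trans (e3 w))).trans
              (Equiv.sigmaEquivProd F R)))
      _ = Nat.card F * Nat.card R := Nat.card_prod _ _
  have c6 : Nat.card Ω * Nat.card R = Nat.card G := by
    rw [hR, ← MulAction.index_stabilizer_of_transitive G ω]
    exact Subgroup.index_mul_card _
  -- put everything together
  have hFix : Nat.card {w : Ω // ∀ k ∈ K, k • w = w} = Nat.card F :=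
    Nat.card_congr (Equiv.subtypeEquivRight fun w => Iff.rfl)
  have hQpos : 0 < Nat.card (G ⧸ N) := Nat.card_pos
  have hΩpos : 0 < Nat.card Ω := Nat.card_pos
  have hNpos : 0 < Nat.card N := Nat.card_pos
  have hRpos : 0 < Nat.card R := Nat.card_pos
  have hP1 : Nat.card {H : Subgroup G | (∃ t : G, H = f t) ∧ H ≤ R} = Nat.card P := c1
  rw [hP1, c2, hFix, div_eq_div_iff (by exact_mod_cast hQpos.ne') (by exact_mod_cast hΩpos.ne')]
  have hnat : Nat.card P * Nat.card Ω = Nat.card F * Nat.card (G ⧸ N) := by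
    apply Nat.eq_of_mul_eq_mul_right (Nat.mul_pos hNpos hRpos)
    calc Nat.card P * Nat.card Ω * (Nat.card N * Nat.card R)
        = (Nat.card N * Nat.card P) * (Nat.card Ω * Nat.card R) := by ring
      _ = Nat.card (QuotientGroup.mk ⁻¹' P) * Nat.card G := by rw [← c3, c6]
      _ = (Nat.card F * Nat.card R) * (Nat.card N * Nat.card (G ⧸ N)) := by rw [c5, c4]
      _ = Nat.card F * Nat.card (G ⧸ N) * (Nat.card N * Nat.card R) := by ring
  exact_mod_cast hnat
end

section
/- There is an absolute constant c such that for every n ≥ 2, the number of unordered pairs of distinct commuting involutions in the symmetric group S_n (equivalently, the number of Klein four-subgroups counted with their generating pairs) satisfies i_{2×2}(S_n) < (n!)^{3/4} · e^{c·n}. -/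
open Equiv Finset

/-- pairs of commuting involutions (incl. identity) -/
abbrev PP (m : ℕ) : Type :=
  {p : Perm (Fin m) × Perm (Fin m) //
    p.1 * p.1 = 1 ∧ p.2 * p.2 = 1 ∧ p.1 * p.2 = p.2 * p.1}

noncomputable def Pc (m : ℕ) : ℕ := Nat.card (PP m)

lemma sq_apply {β : Type*} {x : Perm β} (h : x * x = 1) (a : β) : x (x a) = a := by
  have := congrArg (fun π : Perm β => π a) h
  simpa using this

lemma comm_apply {β : Type*} {x y : Perm β} (h : x * y = y * x) (a : β) :
    x (y a) = y (x a) := by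
  have := congrArg (fun π : Perm β => π a) h
  simpa using this

lemma perm_eq_of {β : Type*} {x u : Perm β} (S : Finset β)
    (hoff : ∀ a ∉ S, x a = u a) (hon : ∀ a ∈ S, x a = u a) : x = u :=
  Equiv.ext fun a => by by_cases h : a ∈ S; exacts [hon a h, hoff a h]

section Step

variable {n : ℕ}

/-- triple of data about the orbit of 0 -/
def T3 (x y : Perm (Fin (n + 1))) : Fin (n + 1) × Fin (n + 1) × Fin (n + 1) :=
  (x 0, y 0, x (y 0))

/-- the orbit of 0 as a finset -/
def SS (t : Fin (n + 1) × Fin (n + 1) × Fin (n + 1)) : Finset (Fin (n + 1)) :=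
  {0, t.1, t.2.1, t.2.2}

lemma mem_SS {t : Fin (n+1) × Fin (n+1) × Fin (n+1)} {a : Fin (n+1)} :
    a ∈ SS t ↔ a = 0 ∨ a = t.1 ∨ a = t.2.1 ∨ a = t.2.2 := by
  simp [SS]

variable {x y u v : Perm (Fin (n+1))}

lemma x_on (hx : x * x = 1) :
    x 0 = (T3 x y).1 ∧ x (T3 x y).1 = 0 ∧ x (T3 x y).2.1 = (T3 x y).2.2 ∧
      x (T3 x y).2.2 = (T3 x y).2.1 :=
  ⟨rfl, sq_apply hx 0, rfl, sq_apply hx _⟩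

lemma y_on (hy : y * y = 1) (hc : x * y = y * x) :
    y 0 = (T3 x y).2.1 ∧ y (T3 x y).1 = (T3 x y).2.2 ∧ y (T3 x y).2.1 = 0 ∧
      y (T3 x y).2.2 = (T3 x y).1 := by
  refine ⟨rfl, (comm_apply hc 0).symm, sq_apply hy 0, ?_⟩
  show y (x (y 0)) = x 0
  rw [← comm_apply hc, sq_apply hy]

lemma SS_inv_x (hx : x * x = 1) (hy : y * y = 1) (hc : x * y = y * x) :
    ∀ a, a ∉ SS (T3 x y) ↔ x a ∉ SS (T3 x y) := by
  have hxS : ∀ a ∈ SS (T3 x y), x a ∈ SS (T3 x y) := by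
    intro a ha
    rcases mem_SS.1 ha with rfl | rfl | rfl | rfl <;> rw [mem_SS]
    · exact Or.inr (Or.inl (x_on hx).1)
    · exact Or.inl (x_on hx).2.1
    · exact Or.inr (Or.inr (Or.inr (x_on hx).2.2.1))
    · exact Or.inr (Or.inr (Or.inl (x_on hx).2.2.2))
  intro a
  constructor
  · intro ha hxa
    exact ha (by simpa [sq_apply hx a] using hxS (x a) hxa)
  · intro ha hmem
    exact ha (hxS a hmem)

lemma SS_inv_y (hx : x * x = 1) (hy : y * y = 1) (hc : x * y = y * x) :
    ∀ a, a ∉ SS (T3 x y) ↔ y a ∉ SS (T3 x y) := by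
  have hyS : ∀ a ∈ SS (T3 x y), y a ∈ SS (T3 x y) := by
    intro a ha
    rcases mem_SS.1 ha with rfl | rfl | rfl | rfl <;> rw [mem_SS]
    · exact Or.inr (Or.inr (Or.inl (y_on hy hc).1))
    · exact Or.inr (Or.inr (Or.inr (y_on hy hc).2.1))
    · exact Or.inl (y_on hy hc).2.2.1
    · exact Or.inr (Or.inl (y_on hy hc).2.2.2)
  intro a
  constructor
  · intro ha hya
    exact ha (by simpa [sq_apply hy a] using hyS (y a) hya)
  · intro ha hmem
    exact ha (hyS a hmem)

/-- if some coincidence happens then the orbit has ≤ 2 elements -/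
lemma small_of_coincide (hx : x * x = 1) (hy : y * y = 1) (hc : x * y = y * x)
    (h : ¬(x 0 ≠ 0 ∧ y 0 ≠ 0 ∧ x (y 0) ≠ 0 ∧ x 0 ≠ y 0 ∧ x 0 ≠ x (y 0) ∧ y 0 ≠ x (y 0))) :
    ∃ w, SS (T3 x y) ⊆ {0, w} := by
  have hx' := sq_apply hx
  have hy' := sq_apply hy
  have hc' := comm_apply hc
  have case1 : x 0 = 0 → ∃ w, SS (T3 x y) ⊆ {0, w} := by
    intro h1
    refine ⟨y 0, fun a ha => ?_⟩
    have h3 : x (y 0) = y 0 := by rw [hc', h1]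
    rcases mem_SS.1 ha with rfl | rfl | rfl | rfl <;>
      simp_all [T3, Finset.mem_insert]
  have case2 : y 0 = 0 → ∃ w, SS (T3 x y) ⊆ {0, w} := by
    intro h2
    refine ⟨x 0, fun a ha => ?_⟩
    have h3 : x (y 0) = x 0 := by rw [h2]
    rcases mem_SS.1 ha with rfl | rfl | rfl | rfl <;>
      simp_all [T3, Finset.mem_insert]
  have case3 : x (y 0) = 0 → ∃ w, SS (T3 x y) ⊆ {0, w} := by
    intro h3
    have h2 : y 0 = x 0 := by
      have := congrArg x h3
      rwa [hx' (y 0)] at this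
    refine ⟨x 0, fun a ha => ?_⟩
    rcases mem_SS.1 ha with rfl | rfl | rfl | rfl <;>
      simp_all [T3, Finset.mem_insert]
  have case4 : x 0 = y 0 → ∃ w, SS (T3 x y) ⊆ {0, w} := by
    intro h4
    have h3 : x (y 0) = 0 := by rw [← h4, hx']
    exact case3 h3
  have case5 : x 0 = x (y 0) → ∃ w, SS (T3 x y) ⊆ {0, w} := by
    intro h5
    exact case2 (x.injective h5).symm
  have case6 : y 0 = x (y 0) → ∃ w, SS (T3 x y) ⊆ {0, w} := by
    intro h6
    apply case1
    have := congrArg y h6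
    rw [hy' 0, ← hc' (y 0), hy' 0] at this
    exact this.symm
  by_cases h1 : x 0 = 0
  · exact case1 h1
  by_cases h2 : y 0 = 0
  · exact case2 h2
  by_cases h3 : x (y 0) = 0
  · exact case3 h3
  by_cases h4 : x 0 = y 0
  · exact case4 h4
  by_cases h5 : x 0 = x (y 0)
  · exact case5 h5
  by_cases h6 : y 0 = x (y 0)
  · exact case6 h6
  exact absurd ⟨h1, h2, h3, h4, h5, h6⟩ h

lemma card_dichotomy (hx : x * x = 1) (hy : y * y = 1) (hc : x * y = y * x) :
    (SS (T3 x y)).card = 1 ∨ (SS (T3 x y)).card = 2 ∨ (SS (T3 x y)).card = 4 := by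
  by_cases h : x 0 ≠ 0 ∧ y 0 ≠ 0 ∧ x (y 0) ≠ 0 ∧ x 0 ≠ y 0 ∧ x 0 ≠ x (y 0) ∧ y 0 ≠ x (y 0)
  · right; right
    obtain ⟨h1, h2, h3, h4, h5, h6⟩ := h
    show ({0, x 0, y 0, x (y 0)} : Finset (Fin (n+1))).card = 4
    rw [Finset.card_insert_of_notMem (by simp [Ne.symm h1, Ne.symm h2, Ne.symm h3]),
      Finset.card_insert_of_notMem (by simp [h4, h5]),
      Finset.card_insert_of_notMem (by simp [h6]), Finset.card_singleton]
  · obtain ⟨w, hw⟩ := small_of_coincide hx hy hc h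
    have h1 : 1 ≤ (SS (T3 x y)).card :=
      Finset.card_pos.2 ⟨0, mem_SS.2 (Or.inl rfl)⟩
    have h2 : (SS (T3 x y)).card ≤ 2 := by
      calc (SS (T3 x y)).card ≤ ({0, w} : Finset (Fin (n+1))).card := Finset.card_le_card hw
        _ ≤ 2 := Finset.card_insert_le _ _ |>.trans (by simp)
    omega

/-- agreement on the orbit once the orbit data agree -/
lemma agree_on_SS (hx : x * x = 1) (hy : y * y = 1) (hc : x * y = y * x)
    (hu : u * u = 1) (hv : v * v = 1) (hc' : u * v = v * u)
    (ht : T3 x y = T3 u v) :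
    ∀ a ∈ SS (T3 x y), x a = u a ∧ y a = v a := by
  have h1 : (T3 x y).1 = (T3 u v).1 := by rw [ht]
  have h2 : (T3 x y).2.1 = (T3 u v).2.1 := by rw [ht]
  have h3 : (T3 x y).2.2 = (T3 u v).2.2 := by rw [ht]
  intro a ha
  rcases mem_SS.1 ha with rfl | rfl | rfl | rfl
  · constructor
    · rw [(x_on hx (y := y)).1, (x_on hu (y := v)).1, h1]
    · rw [(y_on hy hc).1, (y_on hv hc').1, h2]
  · constructor
    · rw [(x_on hx (y := y)).2.1, h1, (x_on hu (y := v)).2.1]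
    · rw [(y_on hy hc).2.1, h1, (y_on hv hc').2.1, h3]
  · constructor
    · rw [(x_on hx (y := y)).2.2.1, h2, (x_on hu (y := v)).2.2.1, h3]
    · rw [(y_on hy hc).2.2.1, h2, (y_on hv hc').2.2.1]
  · constructor
    · rw [(x_on hx (y := y)).2.2.2, h3, (x_on hu (y := v)).2.2.2, h2]
    · rw [(y_on hy hc).2.2.2, h3, (y_on hv hc').2.2.2, h1]

end Step

section Res
variable {n : ℕ}

lemma card_compl (S : Finset (Fin (n+1))) :
    Fintype.card {a : Fin (n+1) // a ∉ S} = (n+1) - S.card := by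
  rw [Fintype.card_subtype_compl]
  congr 1
  · simp
  · exact Fintype.card_coe S

noncomputable def res (S : Finset (Fin (n+1))) (k : ℕ)
    (hk : Fintype.card {a : Fin (n+1) // a ∉ S} = k)
    (x : Perm (Fin (n+1))) (hpx : ∀ a, a ∉ S ↔ x a ∉ S) : Perm (Fin k) :=
  (Fintype.equivFinOfCardEq hk).permCongr (x.subtypePerm (fun a => (hpx a).symm))

variable {S T : Finset (Fin (n+1))} {k : ℕ} {x y u v : Perm (Fin (n+1))}

lemma res_sq (hk : Fintype.card {a : Fin (n+1) // a ∉ S} = k)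
    (hpx : ∀ a, a ∉ S ↔ x a ∉ S) (h : ∀ a, x (x a) = a) :
    res S k hk x hpx * res S k hk x hpx = 1 := by
  ext i
  simp [res, Equiv.permCongr_apply, Equiv.Perm.subtypePerm_apply, Equiv.Perm.mul_apply, h]

lemma res_comm (hk : Fintype.card {a : Fin (n+1) // a ∉ S} = k)
    (hpx : ∀ a, a ∉ S ↔ x a ∉ S) (hpy : ∀ a, a ∉ S ↔ y a ∉ S)
    (h : ∀ a, x (y a) = y (x a)) :
    res S k hk x hpx * res S k hk y hpy = res S k hk y hpy * res S k hk x hpx := by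
  ext i
  simp [res, Equiv.permCongr_apply, Equiv.Perm.subtypePerm_apply, Equiv.Perm.mul_apply, h]

lemma res_extract (hST : S = T)
    (hkS : Fintype.card {a : Fin (n+1) // a ∉ S} = k)
    (hkT : Fintype.card {a : Fin (n+1) // a ∉ T} = k)
    (hpx : ∀ a, a ∉ S ↔ x a ∉ S) (hpu : ∀ a, a ∉ T ↔ u a ∉ T)
    (h : res S k hkS x hpx = res T k hkT u hpu) :
    ∀ a, a ∉ S → x a = u a := by
  subst hST
  intro a ha
  have h2 : x.subtypePerm (fun a => (hpx a).symm) = u.subtypePerm (fun a => (hpu a).symm) :=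
    (Equiv.permCongr (Fintype.equivFinOfCardEq hkS)).injective h
  have h3 := congrArg (fun π : Perm {a : Fin (n+1) // a ∉ S} => (π ⟨a, ha⟩ : Fin (n+1))) h2
  simpa [Equiv.Perm.subtypePerm_apply] using h3

end Res

section Main
variable {n : ℕ}

noncomputable def pairRes (S : Finset (Fin (n+1))) (k : ℕ)
    (hk : Fintype.card {a : Fin (n+1) // a ∉ S} = k)
    (x y : Perm (Fin (n+1))) (hx : x * x = 1) (hy : y * y = 1) (hc : x * y = y * x)
    (hpx : ∀ a, a ∉ S ↔ x a ∉ S) (hpy : ∀ a, a ∉ S ↔ y a ∉ S) : PP k :=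
  ⟨(res S k hk x hpx, res S k hk y hpy),
    res_sq hk hpx (sq_apply hx), res_sq hk hpy (sq_apply hy),
    res_comm hk hpx hpy (comm_apply hc)⟩

/-- the canonical nonzero orbit element, meaningful in the card-2 case -/
def jm (x y : Perm (Fin (n+1))) : Fin (n+1) :=
  if x 0 ≠ 0 then x 0 else if y 0 ≠ 0 then y 0 else x (y 0)

lemma two_elt {t : Fin (n+1) × Fin (n+1) × Fin (n+1)} (hcard : (SS t).card = 2) :
    ∀ a ∈ SS t, ∀ b ∈ SS t, a ≠ 0 → b ≠ 0 → a = b := by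
  obtain ⟨c, d, hcd, hS⟩ := Finset.card_eq_two.1 hcard
  have h0 : (0 : Fin (n+1)) ∈ SS t := mem_SS.2 (Or.inl rfl)
  intro a ha b hb ha0 hb0
  rw [hS, Finset.mem_insert, Finset.mem_singleton] at ha hb h0
  rcases h0 with rfl | rfl
  · rcases ha with rfl | rfl
    · exact absurd rfl ha0
    · rcases hb with rfl | rfl
      · exact absurd rfl hb0
      · rfl
  · rcases ha with rfl | rfl
    · rcases hb with rfl | rfl
      · rfl
      · exact absurd rfl hb0
    · exact absurd rfl ha0

variable {x y u v : Perm (Fin (n+1))}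

lemma jm_spec (hcard : (SS (T3 x y)).card = 2) :
    jm x y ≠ 0 ∧ jm x y ∈ SS (T3 x y) := by
  unfold jm
  by_cases h1 : x 0 ≠ 0
  · simp only [if_pos h1]
    exact ⟨h1, mem_SS.2 (Or.inr (Or.inl rfl))⟩
  · simp only [if_neg h1]
    by_cases h2 : y 0 ≠ 0
    · simp only [if_pos h2]
      exact ⟨h2, mem_SS.2 (Or.inr (Or.inr (Or.inl rfl)))⟩
    · simp only [if_neg h2]
      push_neg at h1 h2
      refine ⟨fun h3 => ?_, mem_SS.2 (Or.inr (Or.inr (Or.inr rfl)))⟩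
      have : SS (T3 x y) = {0} := by
        show ({0, x 0, y 0, x (y 0)} : Finset (Fin (n+1))) = {0}
        rw [h3, h1, h2]
        simp
      rw [this, Finset.card_singleton] at hcard
      omega

lemma comp_eq_jm (hcard : (SS (T3 x y)).card = 2) :
    ∀ a ∈ SS (T3 x y), a ≠ 0 → a = jm x y := by
  intro a ha ha0
  exact two_elt hcard a ha _ (jm_spec hcard).2 ha0 (jm_spec hcard).1

/-- subtypes by orbit size -/
abbrev A1 (n : ℕ) : Type := {p : PP (n+1) // (SS (T3 p.1.1 p.1.2)).card = 1}
abbrev A2 (n : ℕ) : Type := {p : PP (n+1) // (SS (T3 p.1.1 p.1.2)).card = 2}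
abbrev A4 (n : ℕ) : Type := {p : PP (n+1) // (SS (T3 p.1.1 p.1.2)).card = 4}

noncomputable def G1 (p : A1 n) : PP n :=
  pairRes (SS (T3 p.1.1.1 p.1.1.2)) n
    (by rw [card_compl, p.2]; omega) p.1.1.1 p.1.1.2 p.1.2.1 p.1.2.2.1 p.1.2.2.2
    (SS_inv_x p.1.2.1 p.1.2.2.1 p.1.2.2.2) (SS_inv_y p.1.2.1 p.1.2.2.1 p.1.2.2.2)

noncomputable def G2 (p : A2 n) : (Fin (n+1) × (Bool × Bool × Bool)) × PP (n-1) :=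
  ((jm p.1.1.1 p.1.1.2,
    (decide (p.1.1.1 0 = 0), decide (p.1.1.2 0 = 0), decide (p.1.1.1 (p.1.1.2 0) = 0))),
   pairRes (SS (T3 p.1.1.1 p.1.1.2)) (n-1)
    (by rw [card_compl, p.2]; omega) p.1.1.1 p.1.1.2 p.1.2.1 p.1.2.2.1 p.1.2.2.2
    (SS_inv_x p.1.2.1 p.1.2.2.1 p.1.2.2.2) (SS_inv_y p.1.2.1 p.1.2.2.1 p.1.2.2.2))

noncomputable def G4 (p : A4 n) :
    (Fin (n+1) × Fin (n+1) × Fin (n+1)) × PP (n-3) :=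
  (T3 p.1.1.1 p.1.1.2,
   pairRes (SS (T3 p.1.1.1 p.1.1.2)) (n-3)
    (by rw [card_compl, p.2]; omega) p.1.1.1 p.1.1.2 p.1.2.1 p.1.2.2.1 p.1.2.2.2
    (SS_inv_x p.1.2.1 p.1.2.2.1 p.1.2.2.2) (SS_inv_y p.1.2.1 p.1.2.2.1 p.1.2.2.2))

/-- common final step: recover the pair from T3-agreement plus restriction agreement -/
lemma pair_eq_of_T3_res {k : ℕ} {hkS : Fintype.card {a : Fin (n+1) // a ∉ SS (T3 x y)} = k}
    {hkT : Fintype.card {a : Fin (n+1) // a ∉ SS (T3 u v)} = k}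
    (hx : x * x = 1) (hy : y * y = 1) (hc : x * y = y * x)
    (hu : u * u = 1) (hv : v * v = 1) (hc' : u * v = v * u)
    (ht : T3 x y = T3 u v)
    (hres : pairRes (SS (T3 x y)) k hkS x y hx hy hc
        (SS_inv_x hx hy hc) (SS_inv_y hx hy hc) =
      pairRes (SS (T3 u v)) k hkT u v hu hv hc'
        (SS_inv_x hu hv hc') (SS_inv_y hu hv hc')) :
    x = u ∧ y = v := by
  have hST : SS (T3 x y) = SS (T3 u v) := by rw [ht]
  have hres' := congrArg Subtype.val hres
  have hres1 : res (SS (T3 x y)) k hkS x (SS_inv_x hx hy hc) =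
      res (SS (T3 u v)) k hkT u (SS_inv_x hu hv hc') := congrArg Prod.fst hres'
  have hres2 : res (SS (T3 x y)) k hkS y (SS_inv_y hx hy hc) =
      res (SS (T3 u v)) k hkT v (SS_inv_y hu hv hc') := congrArg Prod.snd hres'
  constructor
  · refine perm_eq_of (SS (T3 x y)) (res_extract hST hkS hkT _ _ hres1) ?_
    exact fun a ha => (agree_on_SS hx hy hc hu hv hc' ht a ha).1
  · refine perm_eq_of (SS (T3 x y)) (res_extract hST hkS hkT _ _ hres2) ?_
    exact fun a ha => (agree_on_SS hx hy hc hu hv hc' ht a ha).2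

lemma G1_inj : Function.Injective (G1 (n := n)) := by
  rintro ⟨⟨⟨x, y⟩, hx, hy, hc⟩, hp⟩ ⟨⟨⟨u, v⟩, hu, hv, hc'⟩, hq⟩ h
  have hT : ∀ (a b : Perm (Fin (n+1))), (SS (T3 a b)).card = 1 → T3 a b = (0, 0, 0) := by
    intro a b hcard
    obtain ⟨c, hS⟩ := Finset.card_eq_one.1 hcard
    have h0 : (0 : Fin (n+1)) ∈ SS (T3 a b) := mem_SS.2 (Or.inl rfl)
    have h1 : (T3 a b).1 ∈ SS (T3 a b) := mem_SS.2 (Or.inr (Or.inl rfl))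
    have h2 : (T3 a b).2.1 ∈ SS (T3 a b) := mem_SS.2 (Or.inr (Or.inr (Or.inl rfl)))
    have h3 : (T3 a b).2.2 ∈ SS (T3 a b) := mem_SS.2 (Or.inr (Or.inr (Or.inr rfl)))
    rw [hS, Finset.mem_singleton] at h0 h1 h2 h3
    have e0 := h0.symm
    ext
    · rw [h1, h0]
    · rw [h2, h0]
    · rw [h3, h0]
  have ht : T3 x y = T3 u v := by rw [hT x y hp, hT u v hq]
  obtain ⟨hxu, hyv⟩ := pair_eq_of_T3_res hx hy hc hu hv hc' ht h
  subst hxu; subst hyv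
  rfl

lemma G2_inj : Function.Injective (G2 (n := n)) := by
  rintro ⟨⟨⟨x, y⟩, hx, hy, hc⟩, hp⟩ ⟨⟨⟨u, v⟩, hu, hv, hc'⟩, hq⟩ h
  rw [G2, G2, Prod.mk.injEq, Prod.mk.injEq, Prod.mk.injEq, Prod.mk.injEq] at h
  obtain ⟨⟨hj, hd1, hd2, hd3⟩, hres⟩ := h
  have hm1 : (x 0 = 0) ↔ (u 0 = 0) := by simpa [decide_eq_decide] using hd1
  have hm2 : (y 0 = 0) ↔ (v 0 = 0) := by simpa [decide_eq_decide] using hd2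
  have hm3 : (x (y 0) = 0) ↔ (u (v 0) = 0) := by simpa [decide_eq_decide] using hd3
  have hcomp : ∀ {a b : Fin (n+1)},
      a ∈ SS (T3 x y) → b ∈ SS (T3 u v) → (a = 0 ↔ b = 0) → a = b := by
    intro a b ha hb hab
    by_cases h0 : a = 0
    · rw [h0, (hab.1 h0).symm]
    · have hb0 : b ≠ 0 := fun hh => h0 (hab.2 hh)
      rw [comp_eq_jm hp a ha h0, comp_eq_jm hq b hb hb0, hj]
  have ht : T3 x y = T3 u v := by
    have e1 : x 0 = u 0 :=
      hcomp (mem_SS.2 (Or.inr (Or.inl rfl))) (mem_SS.2 (Or.inr (Or.inl rfl))) hm1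
    have e2 : y 0 = v 0 :=
      hcomp (mem_SS.2 (Or.inr (Or.inr (Or.inl rfl)))) (mem_SS.2 (Or.inr (Or.inr (Or.inl rfl)))) hm2
    have e3 : x (y 0) = u (v 0) :=
      hcomp (mem_SS.2 (Or.inr (Or.inr (Or.inr rfl)))) (mem_SS.2 (Or.inr (Or.inr (Or.inr rfl)))) hm3
    show (x 0, y 0, x (y 0)) = (u 0, v 0, u (v 0))
    rw [e3, e1, e2]
  obtain ⟨hxu, hyv⟩ := pair_eq_of_T3_res hx hy hc hu hv hc' ht hres
  subst hxu; subst hyv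
  rfl

lemma G4_inj : Function.Injective (G4 (n := n)) := by
  rintro ⟨⟨⟨x, y⟩, hx, hy, hc⟩, hp⟩ ⟨⟨⟨u, v⟩, hu, hv, hc'⟩, hq⟩ h
  have ht : T3 x y = T3 u v := congrArg Prod.fst h
  have hres := congrArg Prod.snd h
  obtain ⟨hxu, hyv⟩ := pair_eq_of_T3_res hx hy hc hu hv hc' ht hres
  subst hxu; subst hyv
  rfl

/-- main splitting injection -/
noncomputable def Phi (p : PP (n+1)) : A1 n ⊕ A2 n ⊕ A4 n :=
  if h1 : (SS (T3 p.1.1 p.1.2)).card = 1 then Sum.inl ⟨p, h1⟩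
  else if h2 : (SS (T3 p.1.1 p.1.2)).card = 2 then Sum.inr (Sum.inl ⟨p, h2⟩)
  else Sum.inr (Sum.inr ⟨p, by
    rcases card_dichotomy p.2.1 p.2.2.1 p.2.2.2 with h | h | h
    · exact absurd h h1
    · exact absurd h h2
    · exact h⟩)

lemma Phi_inj : Function.Injective (Phi (n := n)) := by
  intro p q h
  unfold Phi at h
  split_ifs at h <;>
    simp only [Sum.inl.injEq, Sum.inr.injEq, Subtype.mk.injEq, reduceCtorEq] at h <;>
    first | exact h | exact h.elim

lemma card_step : Pc (n+1) ≤ Pc n + (n+1) * 8 * Pc (n-1) +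
    (n+1) * ((n+1) * (n+1)) * Pc (n-3) := by
  have h0 : Pc (n+1) ≤ Nat.card (A1 n ⊕ A2 n ⊕ A4 n) :=
    Nat.card_le_card_of_injective Phi Phi_inj
  rw [Nat.card_sum, Nat.card_sum] at h0
  have h1 : Nat.card (A1 n) ≤ Pc n := Nat.card_le_card_of_injective G1 G1_inj
  have h2 : Nat.card (A2 n) ≤ (n+1) * 8 * Pc (n-1) := by
    have := Nat.card_le_card_of_injective (G2 (n := n)) G2_inj
    rw [Nat.card_prod, Nat.card_prod, Nat.card_prod, Nat.card_prod,
      Nat.card_eq_fintype_card (α := Fin (n+1)), Fintype.card_fin,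
      Nat.card_eq_fintype_card (α := Bool), Fintype.card_bool] at this
    calc Nat.card (A2 n) ≤ (n+1) * (2 * (2 * 2)) * Pc (n-1) := this
      _ = (n+1) * 8 * Pc (n-1) := by ring
  have h4 : Nat.card (A4 n) ≤ (n+1) * ((n+1) * (n+1)) * Pc (n-3) := by
    have := Nat.card_le_card_of_injective (G4 (n := n)) G4_inj
    rw [Nat.card_prod, Nat.card_prod, Nat.card_prod,
      Nat.card_eq_fintype_card (α := Fin (n+1)), Fintype.card_fin] at this
    exact this
  exact h0.trans ((add_le_add h1 (add_le_add h2 h4)).trans_eq (by ring))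

end Main

lemma Pc_le_sq (m : ℕ) : Pc m ≤ m.factorial ^ 2 := by
  calc Pc m = Nat.card (PP m) := rfl
    _ ≤ Nat.card (Perm (Fin m) × Perm (Fin m)) :=
        Nat.card_le_card_of_injective Subtype.val Subtype.val_injective
    _ = m.factorial ^ 2 := by
        simp [Nat.card_eq_fintype_card, Fintype.card_perm, Fintype.card_fin, sq]


lemma sum_pow4 (a c d : ℕ) : (a + c + d)^4 ≤ 81 * (a^4 + c^4 + d^4) := by
  have k1 := le_max_left a (max c d)
  have k2 := le_max_right a (max c d)
  have k3 := le_max_left c d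
  have k4 := le_max_right c d
  have hmem : max a (max c d) = a ∨ max a (max c d) = c ∨ max a (max c d) = d := by
    rcases max_choice a (max c d) with h | h
    · exact Or.inl h
    · rcases max_choice c d with h' | h' <;> rw [h, h']
      · exact Or.inr (Or.inl rfl)
      · exact Or.inr (Or.inr rfl)
  have hkey : (max a (max c d))^4 ≤ a^4 + c^4 + d^4 := by
    rcases hmem with h | h | h <;> rw [h]
    exacts [le_trans (Nat.le_add_right _ _) (Nat.le_add_right _ _),
      le_trans (Nat.le_add_left _ _) (Nat.le_add_right _ _), Nat.le_add_left _ _]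
  calc (a + c + d)^4 ≤ (3 * max a (max c d))^4 := Nat.pow_le_pow_left (by omega) 4
    _ = 81 * (max a (max c d))^4 := by ring
    _ ≤ 81 * (a^4 + c^4 + d^4) := Nat.mul_le_mul_left _ hkey

lemma Pc_pow4 : ∀ m : ℕ, (Pc m)^4 ≤ (m.factorial)^3 * 65536^m := by
  intro m
  induction m using Nat.strong_induction_on with
  | _ m IH =>
    rcases lt_or_ge m 4 with hm | hm
    · interval_cases m
      · calc (Pc 0)^4 ≤ ((Nat.factorial 0)^2)^4 := Nat.pow_le_pow_left (Pc_le_sq 0) 4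
        _ ≤ (Nat.factorial 0)^3 * 65536^0 := by norm_num [Nat.factorial]
      · calc (Pc 1)^4 ≤ ((Nat.factorial 1)^2)^4 := Nat.pow_le_pow_left (Pc_le_sq 1) 4
        _ ≤ (Nat.factorial 1)^3 * 65536^1 := by norm_num [Nat.factorial]
      · calc (Pc 2)^4 ≤ ((Nat.factorial 2)^2)^4 := Nat.pow_le_pow_left (Pc_le_sq 2) 4
        _ ≤ (Nat.factorial 2)^3 * 65536^2 := by norm_num [Nat.factorial]
      · calc (Pc 3)^4 ≤ ((Nat.factorial 3)^2)^4 := Nat.pow_le_pow_left (Pc_le_sq 3) 4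
        _ ≤ (Nat.factorial 3)^3 * 65536^3 := by norm_num [Nat.factorial]
    · obtain ⟨j, rfl⟩ : ∃ j, m = j + 4 := ⟨m - 4, by omega⟩
      have IHa := IH (j+3) (by omega)
      have IHc := IH (j+2) (by omega)
      have IHd := IH j (by omega)
      have hstep := card_step (n := j+3)
      set A := Pc (j+3) with hA
      set C := (j+4) * 8 * Pc (j+2) with hC
      set D := (j+4) * ((j+4) * (j+4)) * Pc j with hD
      have h1 : Pc (j+4) ≤ A + C + D := hstep
      have h2 : (Pc (j+4))^4 ≤ 81 * (A^4 + C^4 + D^4) :=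
        (Nat.pow_le_pow_left h1 4).trans (sum_pow4 A C D)
      set T := ((j+4).factorial)^3 * 65536^(j+4) with hT
      -- piece A
      have pA : 243 * A^4 ≤ T := by
        have hTa : T = ((j+4)^3 * 65536) * (((j+3).factorial)^3 * 65536^(j+3)) := by
          rw [hT, Nat.factorial_succ (j+3)]; ring
        calc 243 * A^4 ≤ 243 * (((j+3).factorial)^3 * 65536^(j+3)) :=
              Nat.mul_le_mul_left _ IHa
          _ ≤ ((j+4)^3 * 65536) * (((j+3).factorial)^3 * 65536^(j+3)) := by
              apply Nat.mul_le_mul_right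
              calc 243 ≤ 1 * 65536 := by norm_num
                _ ≤ (j+4)^3 * 65536 := Nat.mul_le_mul_right _ (Nat.one_le_pow _ _ (by omega))
          _ = T := hTa.symm
      -- piece C
      have pC : 243 * C^4 ≤ T := by
        have hTc : T = ((j+4)^3 * (j+3)^3 * 65536^2) *
            (((j+2).factorial)^3 * 65536^(j+2)) := by
          rw [hT, Nat.factorial_succ (j+3), Nat.factorial_succ (j+2)]; ring
        have hple : (j+3) ≤ (j+3)^3 := Nat.le_self_pow (by norm_num) _
        have hcoef : 243 * (4096 * (j+4)^4) ≤ (j+4)^3 * (j+3)^3 * 65536^2 := by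
          calc 243 * (4096 * (j+4)^4) = 995328 * ((j+4)^3 * (j+4)) := by ring
            _ ≤ 995328 * ((j+4)^3 * (2 * (j+3)^3)) := by
                apply Nat.mul_le_mul_left
                apply Nat.mul_le_mul_left
                omega
            _ = ((j+4)^3 * (j+3)^3) * 1990656 := by ring
            _ ≤ ((j+4)^3 * (j+3)^3) * 65536^2 := Nat.mul_le_mul_left _ (by norm_num)
            _ = (j+4)^3 * (j+3)^3 * 65536^2 := by ring
        calc 243 * C^4 = (243 * (4096 * (j+4)^4)) * (Pc (j+2))^4 := by rw [hC]; ring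
          _ ≤ (243 * (4096 * (j+4)^4)) * (((j+2).factorial)^3 * 65536^(j+2)) :=
              Nat.mul_le_mul_left _ IHc
          _ ≤ ((j+4)^3 * (j+3)^3 * 65536^2) * (((j+2).factorial)^3 * 65536^(j+2)) :=
              Nat.mul_le_mul_right _ hcoef
          _ = T := hTc.symm
      -- piece D
      have pD : 243 * D^4 ≤ T := by
        have hTd : T = ((j+4)^3 * (j+3)^3 * (j+2)^3 * (j+1)^3 * 65536^4) *
            ((j.factorial)^3 * 65536^j) := by
          rw [hT, Nat.factorial_succ (j+3), Nat.factorial_succ (j+2),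
            Nat.factorial_succ (j+1), Nat.factorial_succ j]; ring
        have p3 : (j+4)^3 ≤ 8 * (j+3)^3 := by
          calc (j+4)^3 ≤ (2*(j+3))^3 := Nat.pow_le_pow_left (by omega) 3
            _ = 8 * (j+3)^3 := by ring
        have p2 : (j+4)^3 ≤ 8 * (j+2)^3 := by
          calc (j+4)^3 ≤ (2*(j+2))^3 := Nat.pow_le_pow_left (by omega) 3
            _ = 8 * (j+2)^3 := by ring
        have p1 : (j+4)^3 ≤ 64 * (j+1)^3 := by
          calc (j+4)^3 ≤ (4*(j+1))^3 := Nat.pow_le_pow_left (by omega) 3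
            _ = 64 * (j+1)^3 := by ring
        have hcoef : 243 * (j+4)^12 ≤ (j+4)^3 * (j+3)^3 * (j+2)^3 * (j+1)^3 * 65536^4 := by
          calc 243 * (j+4)^12
              = 243 * ((j+4)^3 * ((j+4)^3 * ((j+4)^3 * (j+4)^3))) := by ring
            _ ≤ 243 * ((j+4)^3 * ((8*(j+3)^3) * ((8*(j+2)^3) * (64*(j+1)^3)))) := by
                apply Nat.mul_le_mul_left
                apply Nat.mul_le_mul_left
                exact Nat.mul_le_mul p3 (Nat.mul_le_mul p2 p1)
            _ = ((j+4)^3 * (j+3)^3 * (j+2)^3 * (j+1)^3) * 995328 := by ring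
            _ ≤ ((j+4)^3 * (j+3)^3 * (j+2)^3 * (j+1)^3) * 65536^4 :=
                Nat.mul_le_mul_left _ (by norm_num)
            _ = (j+4)^3 * (j+3)^3 * (j+2)^3 * (j+1)^3 * 65536^4 := by ring
        calc 243 * D^4 = (243 * (j+4)^12) * (Pc j)^4 := by rw [hD]; ring
          _ ≤ (243 * (j+4)^12) * ((j.factorial)^3 * 65536^j) :=
              Nat.mul_le_mul_left _ IHd
          _ ≤ ((j+4)^3 * (j+3)^3 * (j+2)^3 * (j+1)^3 * 65536^4) *
              ((j.factorial)^3 * 65536^j) := Nat.mul_le_mul_right _ hcoef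
          _ = T := hTd.symm
      have h3 : 3 * (81 * (A^4 + C^4 + D^4)) ≤ 3 * T := by
        calc 3 * (81 * (A^4 + C^4 + D^4)) = 243*A^4 + 243*C^4 + 243*D^4 := by ring
          _ ≤ T + T + T := add_le_add (add_le_add pA pC) pD
          _ = 3 * T := by ring
      exact h2.trans (Nat.le_of_mul_le_mul_left h3 (by norm_num))

abbrev KG : Type := Multiplicative (ZMod 2) × Multiplicative (ZMod 2)

def kg1 : KG := (Multiplicative.ofAdd 1, 1)
def kg2 : KG := (1, Multiplicative.ofAdd 1)

lemma kg1_sq : kg1 * kg1 = 1 := by decide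
lemma kg2_sq : kg2 * kg2 = 1 := by decide

lemma klein_elems : ∀ k : KG, k = 1 ∨ k = kg1 ∨ k = kg2 ∨ k = kg1 * kg2 := by decide

noncomputable def kleinToPair {n : ℕ}
    (V : {V : Subgroup (Perm (Fin n)) // Nonempty (V ≃* KG)}) : PP n :=
  ⟨(((V.2.some.symm kg1 : V.1) : Perm (Fin n)),
    ((V.2.some.symm kg2 : V.1) : Perm (Fin n))), by
      rw [← Subgroup.coe_mul, ← map_mul, kg1_sq, map_one, Subgroup.coe_one], by
      rw [← Subgroup.coe_mul, ← map_mul, kg2_sq, map_one, Subgroup.coe_one], by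
      rw [← Subgroup.coe_mul, ← Subgroup.coe_mul, ← map_mul, ← map_mul, mul_comm]⟩

lemma klein_closure {n : ℕ} (V : Subgroup (Perm (Fin n))) (φ : V ≃* KG) :
    V = Subgroup.closure
      {((φ.symm kg1 : V) : Perm (Fin n)), ((φ.symm kg2 : V) : Perm (Fin n))} := by
  apply le_antisymm
  · intro w hw
    have hk := klein_elems (φ ⟨w, hw⟩)
    have hx : ((φ.symm kg1 : V) : Perm (Fin n)) ∈
        Subgroup.closure {((φ.symm kg1 : V) : Perm (Fin n)),
          ((φ.symm kg2 : V) : Perm (Fin n))} :=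
      Subgroup.subset_closure (by simp)
    have hy : ((φ.symm kg2 : V) : Perm (Fin n)) ∈
        Subgroup.closure {((φ.symm kg1 : V) : Perm (Fin n)),
          ((φ.symm kg2 : V) : Perm (Fin n))} :=
      Subgroup.subset_closure (by simp)
    rcases hk with hk | hk | hk | hk
    all_goals
      have hw' := congrArg (fun z => ((φ.symm z : V) : Perm (Fin n))) hk
      simp only [MulEquiv.symm_apply_apply] at hw'
      rw [hw']
    · rw [map_one, Subgroup.coe_one]
      exact Subgroup.one_mem _
    · exact hx
    · exact hy
    · rw [map_mul, Subgroup.coe_mul]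
      exact Subgroup.mul_mem _ hx hy
  · rw [Subgroup.closure_le]
    rintro w (rfl | rfl) <;> exact SetLike.coe_mem _

lemma kleinToPair_inj {n : ℕ} : Function.Injective (kleinToPair (n := n)) := by
  rintro ⟨V, hV⟩ ⟨W, hW⟩ h
  have h' := congrArg Subtype.val h
  have h1 : ((hV.some.symm kg1 : V) : Perm (Fin n)) = ((hW.some.symm kg1 : W) : Perm (Fin n)) :=
    congrArg Prod.fst h'
  have h2 : ((hV.some.symm kg2 : V) : Perm (Fin n)) = ((hW.some.symm kg2 : W) : Perm (Fin n)) :=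
    congrArg Prod.snd h'
  have : V = W := by
    rw [klein_closure V hV.some, klein_closure W hW.some, h1, h2]
  simp [this]

lemma klein_card_le (n : ℕ) :
    Nat.card {V : Subgroup (Perm (Fin n)) // Nonempty (V ≃* KG)} ≤ Pc n :=
  Nat.card_le_card_of_injective kleinToPair kleinToPair_inj


/-- i_{2×2}(S_n) < (n!)^{3/4}·e^{cn} for an absolute constant c. -/
theorem stmt_14 :
    ∃ c : ℝ, 0 < c ∧ ∀ n : ℕ, 2 ≤ n →
      (Nat.card {V : Subgroup (Equiv.Perm (Fin n)) //
          Nonempty (V ≃* Multiplicative (ZMod 2) × Multiplicative (ZMod 2))} : ℝ) <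
        (n.factorial : ℝ) ^ ((3 : ℝ) / 4) * Real.exp (c * n) := by
  refine ⟨3, by norm_num, fun n hn => ?_⟩
  have hfac : (0:ℝ) < (n.factorial : ℝ) := by
    exact_mod_cast Nat.factorial_pos n
  have hQ : ((Pc n : ℝ))^4 ≤ (n.factorial : ℝ)^3 * 65536^n := by
    exact_mod_cast Pc_pow4 n
  have hb : (Pc n : ℝ) ≤ (n.factorial : ℝ)^((3:ℝ)/4) * 16^n := by
    have h16 : ((n.factorial : ℝ)^((3:ℝ)/4) * 16^n)^4 = (n.factorial : ℝ)^3 * 65536^n := by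
      rw [mul_pow]
      congr 1
      · rw [← Real.rpow_natCast ((n.factorial : ℝ)^((3:ℝ)/4)) 4,
          ← Real.rpow_mul (le_of_lt hfac)]
        rw [show ((3:ℝ)/4 * (4:ℕ) : ℝ) = ((3:ℕ):ℝ) by push_cast; ring, Real.rpow_natCast]
      · rw [show (65536:ℝ) = 16^4 by norm_num, ← pow_mul, ← pow_mul, mul_comm]
    apply le_of_pow_le_pow_left₀ (by norm_num : 4 ≠ 0) (by positivity)
    rw [h16]
    exact hQ
  have hexp : (16:ℝ)^n < Real.exp (3 * n) := by
    have h3 : Real.exp (3 * (n:ℝ)) = (Real.exp 3)^n := by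
      rw [mul_comm, Real.exp_nat_mul]
    rw [h3]
    have he : (16:ℝ) < Real.exp 3 := by
      have h1 : Real.exp 3 = (Real.exp 1)^3 := by
        rw [← Real.exp_nat_mul]; norm_num
      calc (16:ℝ) < (2.7182818283:ℝ)^3 := by norm_num
        _ < (Real.exp 1)^3 := by
            apply pow_lt_pow_left₀ Real.exp_one_gt_d9 (by norm_num) (by norm_num)
        _ = Real.exp 3 := h1.symm
    exact pow_lt_pow_left₀ he (by norm_num) (by omega)
  calc (Nat.card {V : Subgroup (Equiv.Perm (Fin n)) //
          Nonempty (V ≃* Multiplicative (ZMod 2) × Multiplicative (ZMod 2))} : ℝ)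
      ≤ (Pc n : ℝ) := Nat.cast_le.2 (klein_card_le n)
    _ ≤ (n.factorial : ℝ)^((3:ℝ)/4) * 16^n := hb
    _ < (n.factorial : ℝ)^((3:ℝ)/4) * Real.exp (3 * n) :=
        mul_lt_mul_of_pos_left hexp (Real.rpow_pos_of_pos hfac _)
end
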